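/- arXiv:1111.5966 — 10 statements merged into one kernel-verified Lean document; each statement's English description precedes it below -/
import Mathlib

section
/- Let Γ ⊂ ℝ^ℤ be a nonempty collection of sequences that is totally ordered under the pointwise partial order and invariant under all shift maps τ_{k,l}. Then there exists a single ω ∈ ℝ such that every x ∈ Γ has rotation number ω, and moreover every x ∈ Γ satisfies |x_i − x_0 − ω·i| ≤ 1 for all i ∈ ℤ. -/
open Filter Topology

/-- The shift map `τ_{k,l}`: `(τ_{k,l} x) i = x (i - k) + l`. -/
def tau (k l : ℤ) (x : ℤ → ℝ) : ℤ → ℝ := fun i => x (i - k) + (l : ℝ)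

/-- A sequence is Birkhoff (well-ordered) if its integer translates are totally ordered
in the pointwise partial order. -/
def Birkhoff (x : ℤ → ℝ) : Prop :=
  ∀ k l k' l' : ℤ, tau k l x ≤ tau k' l' x ∨ tau k' l' x ≤ tau k l x

/-- `x` has rotation number `ω` if `x n / n → ω` as `n → ±∞`. -/
def HasRotNum (x : ℤ → ℝ) (ω : ℝ) : Prop :=
  Tendsto (fun n : ℤ => x n / (n : ℝ)) atTop (𝓝 ω) ∧
  Tendsto (fun n : ℤ => x n / (n : ℝ)) atBot (𝓝 ω)

/-- A Birkhoff sequence of rotation number `ω` is maximally periodic if `τ_{k,l} x = x`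
whenever `-ω k + l = 0`. -/
def MaxPeriodic (ω : ℝ) (x : ℤ → ℝ) : Prop :=
  ∀ k l : ℤ, -ω * (k : ℝ) + (l : ℝ) = 0 → tau k l x = x

/-- Partial derivative of a function on sequence space with respect to coordinate `i`. -/
noncomputable def pd (F : (ℤ → ℝ) → ℝ) (i : ℤ) : (ℤ → ℝ) → ℝ :=
  fun x => deriv (fun t => F (Function.update x i t)) (x i)

/-- Iterated partial derivatives along a list of coordinates. -/
noncomputable def pdList (F : (ℤ → ℝ) → ℝ) : List ℤ → (ℤ → ℝ) → ℝ
  | [] => F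
  | i :: L => pd (pdList F L) i

/-- `F` and `G` are `ε`-close in the `C^k` norm: all iterated partial derivatives of order
`≤ k` of the difference are bounded by `ε`. -/
def CkClose (k : ℕ) (ε : ℝ) (F G : (ℤ → ℝ) → ℝ) : Prop :=
  ∀ L : List ℤ, L.length ≤ k → ∀ x : ℤ → ℝ, |pdList (fun y => F y - G y) L x| ≤ ε

/-- Conditions A-E on a family of local potentials `S j : ℝ^ℤ → ℝ`, with range `r` and
uniform derivative bound `C`. -/
structure SatisfiesAE (r : ℕ) (C : ℝ) (S : ℤ → (ℤ → ℝ) → ℝ) : Prop where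
  r_pos : 1 ≤ r
  C_pos : 0 < C
  /- A: finite range -/
  finRange : ∀ j : ℤ, ∀ x y : ℤ → ℝ, (∀ i : ℤ, |i - j| ≤ (r : ℤ) → x i = y i) → S j x = S j y
  /- A: C² smoothness -/
  contS : ∀ j : ℤ, Continuous (S j)
  diff1 : ∀ j i : ℤ, ∀ x : ℤ → ℝ, DifferentiableAt ℝ (fun t => S j (Function.update x i t)) (x i)
  diff2 : ∀ j i k : ℤ, ∀ x : ℤ → ℝ,
    DifferentiableAt ℝ (fun t => pd (S j) i (Function.update x k t)) (x k)
  cont1 : ∀ j i : ℤ, Continuous (pd (S j) i)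
  cont2 : ∀ j i k : ℤ, Continuous (pd (pd (S j) i) k)
  /- B: shift invariance -/
  shiftInv : ∀ j k l : ℤ, ∀ x : ℤ → ℝ, S j x = S (j + k) (tau k l x)
  /- C: coercivity -/
  coercive : ∀ j k : ℤ, |k - j| = 1 → ∀ M : ℝ, ∃ R : ℝ, ∀ x : ℤ → ℝ, R ≤ |x k - x j| → M ≤ S j x
  /- D: monotonicity -/
  mono : ∀ j i k : ℤ, i ≠ k → ∀ x : ℤ → ℝ, pd (pd (S j) i) k x ≤ 0
  monoStrict : ∀ j k : ℤ, |j - k| = 1 → ∀ x : ℤ → ℝ, pd (pd (S j) j) k x < 0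
  /- E: bounded derivatives -/
  bdd1 : ∀ j i : ℤ, ∀ x : ℤ → ℝ, |pd (S j) i x| ≤ C
  bdd2 : ∀ j i k : ℤ, ∀ x : ℤ → ℝ, |pd (pd (S j) i) k x| ≤ C

/-- The periodic action `W_p(x) = ∑_{j=1}^p S_j(x)`. -/
noncomputable def Wper (S : ℤ → (ℤ → ℝ) → ℝ) (p : ℕ) (x : ℤ → ℝ) : ℝ :=
  ∑ j ∈ Finset.Icc (1 : ℤ) (p : ℤ), S j x

/-- A `(p,q)`-periodic minimizer: `τ_{p,q} x = x` and `x` minimizes `W_p` over `X_{p,q}`. -/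
def PerMin (S : ℤ → (ℤ → ℝ) → ℝ) (p : ℕ) (q : ℤ) (x : ℤ → ℝ) : Prop :=
  tau (p : ℤ) q x = x ∧ ∀ y : ℤ → ℝ, tau (p : ℤ) q y = y → Wper S p x ≤ Wper S p y

/-- The (formally convergent, by finite range) energy difference `W(x+y) - W(x)`. -/
noncomputable def Wdiff (S : ℤ → (ℤ → ℝ) → ℝ) (x y : ℤ → ℝ) : ℝ :=
  ∑' j : ℤ, (S j (fun i => x i + y i) - S j x)

/-- `x` is a global minimizer: every finite-support variation does not decrease the energy. -/
def GlobalMin (S : ℤ → (ℤ → ℝ) → ℝ) (x : ℤ → ℝ) : Prop :=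
  ∀ y : ℤ → ℝ, (Function.support y).Finite → 0 ≤ Wdiff S x y

/-- The extended orbit `Σ_y = { y k + l : k, l ∈ ℤ }`. -/
def extOrbit (y : ℤ → ℝ) : Set ℝ := {ξ : ℝ | ∃ k l : ℤ, ξ = y k + (l : ℝ)}

private lemma exists_omega_of_nearAdd (b : ℤ → ℝ) (hb0 : b 0 = 0)
    (hb : ∀ m n : ℤ, |b (m + n) - b m - b n| ≤ 1) :
    ∃ ω : ℝ, ∀ m : ℤ, |b m - ω * (m : ℝ)| ≤ 1 := by
  have hiter : ∀ (n : ℕ) (m : ℤ), |b (((n:ℤ) + 1) * m) - ((n : ℝ) + 1) * b m| ≤ (n : ℝ) := by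
    intro n
    induction n with
    | zero => intro m; norm_num
    | succ n ih =>
      intro m
      have e : (((n + 1 : ℕ):ℤ) + 1) * m = ((n:ℤ) + 1) * m + m := by push_cast; ring
      rw [e]
      have h1 := hb (((n:ℤ) + 1) * m) m
      have h2 := ih m
      have key : b (((n:ℤ)+1)*m + m) - (((n + 1 : ℕ):ℝ) + 1) * b m
          = (b (((n:ℤ)+1)*m + m) - b (((n:ℤ)+1)*m) - b m)
            + (b (((n:ℤ)+1)*m) - ((n:ℝ)+1) * b m) := by push_cast; ring
      rw [key]
      refine (abs_add_le _ _).trans ?_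
      push_cast
      linarith
  have hcross : ∀ p q : ℕ,
      ((q:ℝ)+1) * b ((p:ℤ)+1) - ((p:ℝ)+1) * b ((q:ℤ)+1) ≤ (p:ℝ) + (q:ℝ) := by
    intro p q
    have h1 := abs_le.mp (hiter p ((q:ℤ)+1))
    have h2 := abs_le.mp (hiter q ((p:ℤ)+1))
    have e : ((q:ℤ)+1) * ((p:ℤ)+1) = ((p:ℤ)+1) * ((q:ℤ)+1) := by ring
    rw [e] at h2
    linarith [h1.1, h1.2, h2.1, h2.2]
  have hub : ∀ p q : ℕ, (b ((p:ℤ)+1) - 1) / ((p:ℝ)+1) ≤ (b ((q:ℤ)+1) + 1) / ((q:ℝ)+1) := by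
    intro p q
    have hp : (0:ℝ) < (p:ℝ)+1 := by positivity
    have hq : (0:ℝ) < (q:ℝ)+1 := by positivity
    rw [div_le_div_iff₀ hp hq]
    nlinarith [hcross p q]
  set A : Set ℝ := Set.range (fun p : ℕ => (b ((p:ℤ)+1) - 1) / ((p:ℝ)+1)) with hA
  have hAne : A.Nonempty := ⟨_, ⟨0, rfl⟩⟩
  have hAbdd : BddAbove A := ⟨(b ((0:ℤ)+1) + 1) / ((0:ℝ)+1), by rintro _ ⟨p, rfl⟩; simpa using hub p 0⟩
  set ω := sSup A with hω
  have hlow : ∀ p : ℕ, (b ((p:ℤ)+1) - 1) / ((p:ℝ)+1) ≤ ω := fun p => le_csSup hAbdd ⟨p, rfl⟩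
  have hhigh : ∀ q : ℕ, ω ≤ (b ((q:ℤ)+1) + 1) / ((q:ℝ)+1) :=
    fun q => csSup_le hAne (by rintro _ ⟨p, rfl⟩; exact hub p q)
  have hpos : ∀ m : ℤ, 1 ≤ m → |b m - ω * (m:ℝ)| ≤ 1 := by
    intro m hm
    obtain ⟨p, hp⟩ : ∃ p : ℕ, (p:ℤ) + 1 = m := ⟨(m-1).toNat, by omega⟩
    subst hp
    have hp1 : (0:ℝ) < (p:ℝ)+1 := by positivity
    have l1 := (div_le_iff₀ hp1).mp (hlow p)
    have l2 := (le_div_iff₀ hp1).mp (hhigh p)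
    rw [abs_le]
    push_cast
    constructor <;> nlinarith
  refine ⟨ω, fun m => ?_⟩
  rcases lt_trichotomy m 0 with hm | hm | hm
  · have hm1 : m ≤ -1 := by omega
    refine le_of_forall_pos_le_add fun ε hε => ?_
    obtain ⟨n, hn⟩ := exists_nat_one_div_lt hε
    have hK1 : (1:ℤ) ≤ ((n:ℤ)+1) * (-m) := by nlinarith [Int.natCast_nonneg n]
    have hposK := hpos (((n:ℤ)+1) * (-m)) hK1
    have h1 := abs_le.mp (hiter n m)
    have h2 : |b (((n:ℤ)+1)*m) + b (((n:ℤ)+1)*(-m))| ≤ 1 := by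
      have h := hb (((n:ℤ)+1)*m) (((n:ℤ)+1)*(-m))
      have e : ((n:ℤ)+1)*m + ((n:ℤ)+1)*(-m) = 0 := by ring
      rw [e, hb0] at h
      have e2 : -(b (((n:ℤ)+1)*m) + b (((n:ℤ)+1)*(-m)))
          = 0 - b (((n:ℤ)+1)*m) - b (((n:ℤ)+1)*(-m)) := by ring
      rw [← abs_neg, e2]; exact h
    have h2' := abs_le.mp h2
    have h3 := abs_le.mp hposK
    set D := b m - ω * (m:ℝ) with hD
    have hcast : ((((n:ℤ)+1)*(-m) : ℤ) : ℝ) = ((n:ℝ)+1)*(-(m:ℝ)) := by push_cast; ring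
    have key : ((n:ℝ)+1) * D
        = -(b (((n:ℤ)+1)*m) - ((n:ℝ)+1)*b m)
          + (b (((n:ℤ)+1)*m) + b (((n:ℤ)+1)*(-m)))
          - (b (((n:ℤ)+1)*(-m)) - ω * ((((n:ℤ)+1)*(-m) : ℤ) : ℝ)) := by
      rw [hD, hcast]; ring
    have hn1 : (0:ℝ) < (n:ℝ)+1 := by positivity
    have hup : ((n:ℝ)+1) * D ≤ (n:ℝ) + 2 := by
      rw [key]; linarith [h1.1, h1.2, h2'.1, h2'.2, h3.1, h3.2]
    have hdn : -((n:ℝ) + 2) ≤ ((n:ℝ)+1) * D := by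
      rw [key]; linarith [h1.1, h1.2, h2'.1, h2'.2, h3.1, h3.2]
    have e3 : ((n:ℝ)+1) * (1 + 1/((n:ℝ)+1)) = (n:ℝ) + 2 := by field_simp; ring
    have hDle : D ≤ 1 + 1/((n:ℝ)+1) := le_of_mul_le_mul_left (by rw [e3]; exact hup) hn1
    have hDge : -(1 + 1/((n:ℝ)+1)) ≤ D :=
      le_of_mul_le_mul_left (by rw [mul_neg, e3]; exact hdn) hn1
    rw [abs_le]
    constructor
    · linarith
    · linarith
  · subst hm; norm_num [hb0]
  · exact hpos m hm

private lemma hasRotNum_of_bound (x : ℤ → ℝ) (ω : ℝ)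
    (hbd : ∀ m : ℤ, |x m - x 0 - ω * (m:ℝ)| ≤ 1) : HasRotNum x ω := by
  have hbound : ∀ n : ℤ, n ≠ 0 → ‖x n / (n:ℝ) - ω‖ ≤ (1 + |x 0|) / |(n:ℝ)| := by
    intro n hn
    have hn' : ((n:ℝ)) ≠ 0 := Int.cast_ne_zero.mpr hn
    have h1 : |x n - ω * n| ≤ 1 + |x 0| := by
      calc |x n - ω*n| = |(x n - x 0 - ω*n) + x 0| := by ring_nf
        _ ≤ |x n - x 0 - ω*n| + |x 0| := abs_add_le _ _
        _ ≤ 1 + |x 0| := by linarith [hbd n]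
    have heq : x n / (n:ℝ) - ω = (x n - ω * n) / n := by field_simp
    rw [Real.norm_eq_abs, heq, abs_div]
    have habs : (0:ℝ) < |(n:ℝ)| := abs_pos.mpr hn'
    gcongr
  constructor
  · rw [← tendsto_sub_nhds_zero_iff]
    refine squeeze_zero_norm' (a := fun n : ℤ => (1 + |x 0|) / |(n:ℝ)|) ?_
      (tendsto_const_nhds.div_atTop (tendsto_abs_atTop_atTop.comp tendsto_intCast_atTop_atTop))
    filter_upwards [eventually_ne_atTop (0:ℤ)] with n hn using hbound n hn
  · rw [← tendsto_sub_nhds_zero_iff]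
    refine squeeze_zero_norm' (a := fun n : ℤ => (1 + |x 0|) / |(n:ℝ)|) ?_
      (tendsto_const_nhds.div_atTop
        (tendsto_abs_atBot_atTop.comp (tendsto_intCast_atBot_iff.mpr tendsto_id)))
    filter_upwards [eventually_ne_atBot (0:ℤ)] with n hn using hbound n hn

/-- A nonempty, totally ordered, shift-invariant collection of sequences has a
common rotation number `ω`, and every element satisfies `|x i - x 0 - ω i| ≤ 1`. -/
theorem rotation_number_of_ordered_shift_invariant_family
    (Γ : Set (ℤ → ℝ)) (hne : Γ.Nonempty)
    (htot : ∀ x ∈ Γ, ∀ y ∈ Γ, x ≤ y ∨ y ≤ x)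
    (hshift : ∀ x ∈ Γ, ∀ k l : ℤ, tau k l x ∈ Γ) :
    ∃ ω : ℝ, ∀ x ∈ Γ, HasRotNum x ω ∧ ∀ i : ℤ, |x i - x 0 - ω * (i : ℝ)| ≤ 1 := by
  -- comparability with translates
  have hcmp : ∀ x ∈ Γ, ∀ k l : ℤ, x ≤ tau k l x ∨ tau k l x ≤ x :=
    fun x hx k l => htot x hx _ (hshift x hx k l)
  -- lower bound
  have hL : ∀ x ∈ Γ, ∀ k j : ℤ, x j + (x k - x 0) - 1 ≤ x (j + k) := by
    intro x hx k j
    set h : ℝ := x k - x 0 with hh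
    set l : ℤ := ⌈h⌉ - 1 with hl
    have hlo : (l:ℝ) < h := by
      rw [hl]; push_cast; linarith [Int.ceil_lt_add_one h]
    have hhi : h - 1 ≤ (l:ℝ) := by
      rw [hl]; push_cast; linarith [Int.le_ceil h]
    rcases hcmp x hx k l with hc | hc
    · exfalso
      have h1 := hc k
      simp only [tau, sub_self] at h1
      linarith
    · have h1 := hc (j + k)
      simp only [tau, add_sub_cancel_right] at h1
      linarith
  -- upper bound
  have hU : ∀ x ∈ Γ, ∀ k j : ℤ, x (j + k) ≤ x j + (x k - x 0) + 1 := by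
    intro x hx k j
    set h : ℝ := x k - x 0 with hh
    set l : ℤ := ⌊h⌋ + 1 with hl
    have hlo : h < (l:ℝ) := by
      rw [hl]; push_cast; linarith [Int.lt_floor_add_one h]
    have hhi : (l:ℝ) ≤ h + 1 := by
      rw [hl]; push_cast; linarith [Int.floor_le h]
    rcases hcmp x hx k l with hc | hc
    · have h1 := hc (j + k)
      simp only [tau, add_sub_cancel_right] at h1
      linarith
    · exfalso
      have h1 := hc k
      simp only [tau, sub_self] at h1
      linarith
  -- each x has its own ω
  have hωx : ∀ x ∈ Γ, ∃ ω : ℝ, ∀ m : ℤ, |x m - x 0 - ω * (m:ℝ)| ≤ 1 := by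
    intro x hx
    obtain ⟨ω, hω⟩ := exists_omega_of_nearAdd (fun i => x i - x 0) (by simp)
      (fun m n => by
        have h1 := hL x hx n m
        have h2 := hU x hx n m
        rw [abs_le]
        constructor <;> · linarith)
    exact ⟨ω, fun m => by have := hω m; simpa using this⟩
  -- comparison of rotation numbers
  have hle : ∀ u ∈ Γ, ∀ v ∈ Γ, ∀ ou ov : ℝ,
      (∀ m : ℤ, |u m - u 0 - ou * (m:ℝ)| ≤ 1) →
      (∀ m : ℤ, |v m - v 0 - ov * (m:ℝ)| ≤ 1) → ou ≤ ov := by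
    intro u hu v hv ou ov hou hov
    set l : ℤ := ⌈u 0 - v 0⌉ + 1 with hldef
    have hl : u 0 - v 0 < (l:ℝ) := by
      rw [hldef]; push_cast; linarith [Int.le_ceil (u 0 - v 0)]
    have hub : ∀ i : ℤ, u i ≤ v i + (l:ℝ) := by
      rcases htot u hu _ (hshift v hv 0 l) with hc | hc
      · intro i; have := hc i; simpa [tau] using this
      · exfalso; have := hc 0; simp [tau] at this; linarith
    have hkey : ∀ i : ℤ, (ou - ov) * (i:ℝ) ≤ v 0 - u 0 + (l:ℝ) + 2 := by
      intro i
      have h1 := (abs_le.mp (hou i)).1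
      have h2 := (abs_le.mp (hov i)).2
      have h3 := hub i
      nlinarith
    by_contra hlt
    push_neg at hlt
    obtain ⟨n, hn⟩ := exists_nat_gt ((v 0 - u 0 + (l:ℝ) + 2) / (ou - ov))
    have hd : (0:ℝ) < ou - ov := sub_pos.mpr hlt
    have h4 := hkey (n:ℤ)
    push_cast at h4
    have h5 : v 0 - u 0 + (l:ℝ) + 2 < (n:ℝ) * (ou - ov) := (div_lt_iff₀ hd).mp hn
    nlinarith
  -- assemble
  obtain ⟨x0, hx0⟩ := hne
  obtain ⟨ω, hω⟩ := hωx x0 hx0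
  refine ⟨ω, fun x hx => ?_⟩
  obtain ⟨ωx, hωxx⟩ := hωx x hx
  have heq : ωx = ω :=
    le_antisymm (hle x hx x0 hx0 ωx ω hωxx hω) (hle x0 hx0 x hx ω ωx hω hωxx)
  have hb : ∀ m : ℤ, |x m - x 0 - ω * (m:ℝ)| ≤ 1 := heq ▸ hωxx
  exact ⟨hasRotNum_of_bound x ω hb, hb⟩
end

section
/- Let x^n be a sequence of Birkhoff sequences, where x^n has rotation number ω_n, and suppose x^n converges pointwise to a sequence x^∞ ∈ ℝ^ℤ. Then x^∞ is a Birkhoff sequence, the limit ω := lim_{n→∞} ω_n exists, and x^∞ has rotation number ω. In particular the set of Birkhoff sequences is closed under pointwise convergence and the rotation number map on Birkhoff sequences is continuous for the topology of pointwise convergence. -/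
open Filter Topology

lemma birk_gap {x : ℤ → ℝ} (hB : Birkhoff x) (k i j : ℤ) :
    x (i + k) - x i ≤ x (j + k) - x j + 1 := by
  by_contra hcon
  push_neg at hcon
  set m : ℤ := ⌊x (j + k) - x j⌋ + 1 with hm
  have h1 : x (j + k) - x j < (m : ℝ) := by
    have := Int.lt_floor_add_one (x (j + k) - x j)
    push_cast [hm]; linarith
  have h2 : (m : ℝ) < x (i + k) - x i := by
    have := Int.floor_le (x (j + k) - x j)
    push_cast [hm]; linarith
  rcases hB (-k) (-m) 0 0 with h | h
  · have hi := h i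
    simp [tau, sub_neg_eq_add] at hi
    linarith
  · have hj := h j
    simp [tau, sub_neg_eq_add] at hj
    linarith

lemma birk_chain {x : ℤ → ℝ} (hB : Birkhoff x) (k : ℤ) : ∀ n : ℕ,
    (n : ℝ) * (x k - x 0 - 1) ≤ x (n * k) - x 0 ∧
      x (n * k) - x 0 ≤ (n : ℝ) * (x k - x 0 + 1) := by
  intro n
  induction n with
  | zero => simp
  | succ n ih =>
    have g1 := birk_gap hB k ((n : ℤ) * k) 0
    have g2 := birk_gap hB k 0 ((n : ℤ) * k)
    have e : ((n + 1 : ℕ) : ℤ) * k = (n : ℤ) * k + k := by push_cast; ring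
    rw [e]
    simp only [zero_add] at g1 g2
    push_cast
    constructor <;> [nlinarith [ih.1]; nlinarith [ih.2]]

lemma rot_bound {x : ℤ → ℝ} {ω : ℝ} (hB : Birkhoff x) (hω : HasRotNum x ω) (k : ℤ) :
    |x k - x 0 - k * ω| ≤ 1 := by
  have key : k ≠ 0 →
      Tendsto (fun n : ℕ => x ((n : ℤ) * k) / ((((n : ℤ) * k : ℤ)) : ℝ)) atTop (𝓝 ω) →
      |x k - x 0 - k * ω| ≤ 1 := by
    intro hk0 hlim1
    have hL : Tendsto (fun n : ℕ => (x ((n : ℤ) * k) - x 0) / (n : ℝ)) atTop (𝓝 (ω * k)) := by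
      have h1 : Tendsto
          (fun n : ℕ => x ((n : ℤ) * k) / ((((n : ℤ) * k : ℤ)) : ℝ) * k - x 0 / (n : ℝ))
          atTop (𝓝 (ω * k - 0)) :=
        (hlim1.mul_const _).sub (tendsto_const_div_atTop_nhds_zero_nat _)
      rw [sub_zero] at h1
      refine h1.congr' ?_
      filter_upwards [eventually_ge_atTop 1] with n hn
      have hn0 : (n : ℝ) ≠ 0 := by positivity
      have hk0' : ((k : ℝ)) ≠ 0 := Int.cast_ne_zero.mpr hk0
      push_cast
      field_simp
    have hub : ω * k ≤ x k - x 0 + 1 := by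
      refine le_of_tendsto hL ?_
      filter_upwards [eventually_ge_atTop 1] with n hn
      have hn0 : (0 : ℝ) < n := by positivity
      rw [div_le_iff₀ hn0]
      have := (birk_chain hB k n).2
      linarith [this]
    have hlb : x k - x 0 - 1 ≤ ω * k := by
      refine ge_of_tendsto hL ?_
      filter_upwards [eventually_ge_atTop 1] with n hn
      have hn0 : (0 : ℝ) < n := by positivity
      rw [le_div_iff₀ hn0]
      have := (birk_chain hB k n).1
      linarith [this]
    rw [abs_le]
    constructor <;> · rw [mul_comm] at *; linarith
  rcases lt_trichotomy k 0 with hk | hk | hk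
  · refine key (by omega) ?_
    refine hω.2.comp ?_
    refine tendsto_atBot_mono (fun n => ?_) (tendsto_neg_atTop_atBot.comp tendsto_natCast_atTop_atTop)
    simp only [Function.comp_apply]
    nlinarith [Int.natCast_nonneg n, Int.lt_iff_add_one_le.mp hk]
  · simp [hk]
  · refine key (by omega) ?_
    refine hω.1.comp ?_
    refine tendsto_atTop_mono (fun n => ?_) tendsto_natCast_atTop_atTop
    nlinarith [Int.natCast_nonneg n, Int.lt_iff_add_one_le.mp hk]

lemma rot_top {y : ℤ → ℝ} {w C : ℝ} (h : ∀ k : ℤ, |y k - k * w| ≤ C) :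
    Tendsto (fun k : ℤ => y k / k) atTop (𝓝 w) := by
  have hC : 0 ≤ C := (abs_nonneg _).trans (h 0)
  rw [Metric.tendsto_atTop]
  intro ε hε
  refine ⟨max 1 (⌈C / ε⌉ + 1), fun k hk => ?_⟩
  have hk1 : (1 : ℤ) ≤ k := le_trans (le_max_left _ _) hk
  have hkpos : (0 : ℝ) < k := by exact_mod_cast lt_of_lt_of_le zero_lt_one hk1
  have hk2 : C / ε < (k : ℝ) := by
    have h2 : ⌈C / ε⌉ + 1 ≤ k := le_trans (le_max_right _ _) hk
    calc C / ε ≤ (⌈C / ε⌉ : ℝ) := Int.le_ceil _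
      _ < ((⌈C / ε⌉ + 1 : ℤ) : ℝ) := by push_cast; linarith
      _ ≤ k := by exact_mod_cast h2
  rw [Real.dist_eq]
  have he : y k / k - w = (y k - k * w) / k := by field_simp
  rw [he, abs_div, abs_of_pos hkpos]
  calc |y k - k * w| / (k : ℝ) ≤ C / k := by gcongr; exact h k
    _ < ε := by
      rw [div_lt_iff₀ hkpos]
      have := (div_lt_iff₀ hε).mp hk2
      linarith [mul_comm ε (k : ℝ)]

lemma rot_of_bound {y : ℤ → ℝ} {w C : ℝ} (h : ∀ k : ℤ, |y k - k * w| ≤ C) :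
    HasRotNum y w := by
  refine ⟨rot_top h, ?_⟩
  have h' : ∀ k : ℤ, |(-y (-k)) - k * w| ≤ C := by
    intro k
    have := h (-k)
    rw [← abs_neg]
    convert this using 2
    push_cast
    ring
  have h2 := (rot_top h').comp tendsto_neg_atBot_atTop
  refine Tendsto.congr ?_ h2
  intro n
  simp only [Function.comp_apply, neg_neg]
  push_cast
  rw [neg_div_neg_eq]

/-- Pointwise limits of Birkhoff sequences are Birkhoff, the rotation numbers
converge, and the limit sequence has the limiting rotation number. -/
theorem birkhoff_closed_and_rotation_number_continuous
    (x : ℕ → ℤ → ℝ) (ω : ℕ → ℝ) (xinf : ℤ → ℝ)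
    (hB : ∀ n, Birkhoff (x n)) (hω : ∀ n, HasRotNum (x n) (ω n))
    (hlim : ∀ i : ℤ, Filter.Tendsto (fun n => x n i) Filter.atTop (𝓝 (xinf i))) :
    Birkhoff xinf ∧
    ∃ w : ℝ, Filter.Tendsto ω Filter.atTop (𝓝 w) ∧ HasRotNum xinf w := by
  have htau : ∀ (k l i : ℤ),
      Tendsto (fun n => tau k l (x n) i) atTop (𝓝 (tau k l xinf i)) := by
    intro k l i
    simpa [tau] using (hlim (i - k)).add_const ((l : ℤ) : ℝ)
  have hBinf : Birkhoff xinf := by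
    intro k l k' l'
    by_contra hcon
    push_neg at hcon
    obtain ⟨h1, h2⟩ := hcon
    rw [Pi.le_def] at h1 h2
    push_neg at h1 h2
    obtain ⟨i, hi⟩ := h1
    obtain ⟨j, hj⟩ := h2
    have e1 : ∀ᶠ n in atTop, tau k' l' (x n) i < tau k l (x n) i :=
      (htau k' l' i).eventually_lt (htau k l i) hi
    have e2 : ∀ᶠ n in atTop, tau k l (x n) j < tau k' l' (x n) j :=
      (htau k l j).eventually_lt (htau k' l' j) hj
    obtain ⟨n, hn1, hn2⟩ := (e1.and e2).exists
    rcases hB n k l k' l' with h | h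
    · exact absurd (h i) (not_le.mpr hn1)
    · exact absurd (h j) (not_le.mpr hn2)
  have hc : CauchySeq ω := by
    rw [Metric.cauchySeq_iff']
    intro ε hε
    set K : ℕ := ⌈3 / ε⌉₊ + 1 with hK
    have hKpos : (0 : ℝ) < K := by positivity
    have hK3 : 3 / ε < (K : ℝ) := by
      calc 3 / ε ≤ (⌈3 / ε⌉₊ : ℝ) := Nat.le_ceil _
        _ < K := by rw [hK]; push_cast; linarith
    have hK3' : 3 / (K : ℝ) < ε := by
      rw [div_lt_iff₀ hKpos]
      have := (div_lt_iff₀ hε).mp hK3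
      linarith [mul_comm ε (K : ℝ)]
    obtain ⟨N1, hN1⟩ := Metric.tendsto_atTop.mp (hlim (K : ℤ)) (1/4) (by norm_num)
    obtain ⟨N2, hN2⟩ := Metric.tendsto_atTop.mp (hlim 0) (1/4) (by norm_num)
    set N := max N1 N2 with hNdef
    have hN : ∀ n ≥ N, dist (x n (K : ℤ)) (xinf (K : ℤ)) < 1/4 ∧ dist (x n 0) (xinf 0) < 1/4 :=
      fun n hn => ⟨hN1 n (le_trans (le_max_left _ _) hn), hN2 n (le_trans (le_max_right _ _) hn)⟩
    refine ⟨N, fun n hn => ?_⟩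
    have hb1 := rot_bound (hB n) (hω n) (K : ℤ)
    have hb2 := rot_bound (hB N) (hω N) (K : ℤ)
    obtain ⟨c1, c2⟩ := hN n hn
    obtain ⟨d1, d2⟩ := hN N le_rfl
    rw [Real.dist_eq] at c1 c2 d1 d2 ⊢
    have hcast : ((K : ℤ) : ℝ) = (K : ℝ) := by push_cast; ring
    rw [hcast] at hb1 hb2
    have habs : |(K : ℝ) * (ω n - ω N)| ≤ 3 := by
      rw [abs_le]
      obtain ⟨p1, p2⟩ := abs_le.mp hb1
      obtain ⟨q1, q2⟩ := abs_le.mp hb2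
      obtain ⟨r1, r2⟩ := abs_le.mp c1.le
      obtain ⟨r3, r4⟩ := abs_le.mp c2.le
      obtain ⟨s1, s2⟩ := abs_le.mp d1.le
      obtain ⟨s3, s4⟩ := abs_le.mp d2.le
      constructor <;> nlinarith
    have : |ω n - ω N| ≤ 3 / K := by
      rw [le_div_iff₀ hKpos, mul_comm]
      calc (K : ℝ) * |ω n - ω N| = |(K : ℝ) * (ω n - ω N)| := by
            rw [abs_mul, abs_of_pos hKpos]
        _ ≤ 3 := habs
    linarith
  obtain ⟨w, hw⟩ := cauchySeq_tendsto_of_complete hc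
  refine ⟨hBinf, w, hw, ?_⟩
  have hbnd : ∀ k : ℤ, |xinf k - xinf 0 - k * w| ≤ 1 := by
    intro k
    have ht : Tendsto (fun n => x n k - x n 0 - (k : ℝ) * ω n) atTop
        (𝓝 (xinf k - xinf 0 - (k : ℝ) * w)) :=
      ((hlim k).sub (hlim 0)).sub (hw.const_mul _)
    exact le_of_tendsto' ht.abs (fun n => rot_bound (hB n) (hω n) k)
  refine rot_of_bound (C := 1 + |xinf 0|) (fun k => ?_)
  calc |xinf k - k * w| = |(xinf k - xinf 0 - k * w) + xinf 0| := by ring_nf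
    _ ≤ |xinf k - xinf 0 - k * w| + |xinf 0| := abs_add_le _ _
    _ ≤ 1 + |xinf 0| := by linarith [hbnd k]
end

section
/- Let K ⊂ ℝ be compact and let 𝓑_K be the set of all Birkhoff sequences whose rotation number lies in K. Then the quotient 𝓑_K/ℤ of 𝓑_K by the action of integer vertical translations x ↦ x + n (n ∈ ℤ) is compact in the topology of pointwise convergence. Equivalently: every sequence (x^n) in 𝓑_K admits integers m_n ∈ ℤ such that a subsequence of (x^n + m_n) converges pointwise to an element of 𝓑_K. -/
open Filter Topology

private lemma intCast_atBot : Tendsto (fun n : ℤ => (n : ℝ)) atBot atBot :=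
  tendsto_intCast_atBot_iff.mpr tendsto_id

private lemma iter_le {x : ℤ → ℝ} {k l : ℤ} (h : ∀ i, x i ≤ x (i - k) + l) :
    ∀ n : ℕ, ∀ i, x i ≤ x (i - (n : ℤ) * k) + ((n : ℤ) * l : ℤ) := by
  intro n
  induction n with
  | zero => intro i; simp
  | succ n ih =>
    intro i
    have h1 := h i
    have h2 := ih (i - k)
    have e1 : i - k - (n : ℤ) * k = i - ((n : ℕ) + 1 : ℤ) * k := by ring
    have e2 : (((n : ℤ) * l : ℤ) : ℝ) + (l : ℝ) = ((((n : ℕ) + 1 : ℤ) * l : ℤ) : ℝ) := by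
      push_cast; ring
    calc x i ≤ x (i - k) + l := h1
    _ ≤ x (i - k - (n : ℤ) * k) + ((n : ℤ) * l : ℤ) + l := by linarith
    _ = x (i - ((n : ℕ) + 1 : ℤ) * k) + ((((n : ℕ) + 1 : ℤ) * l : ℤ) : ℝ) := by
        rw [e1]; push_cast; ring

private lemma iter_ge {x : ℤ → ℝ} {k l : ℤ} (h : ∀ i, x (i - k) + l ≤ x i) :
    ∀ n : ℕ, ∀ i, x (i - (n : ℤ) * k) + ((n : ℤ) * l : ℤ) ≤ x i := by
  intro n
  induction n with
  | zero => intro i; simp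
  | succ n ih =>
    intro i
    have h1 := h i
    have h2 := ih (i - k)
    have e1 : i - k - (n : ℤ) * k = i - ((n : ℕ) + 1 : ℤ) * k := by ring
    calc x (i - ((n : ℕ) + 1 : ℤ) * k) + ((((n : ℕ) + 1 : ℤ) * l : ℤ) : ℝ)
        = x (i - k - (n : ℤ) * k) + ((n : ℤ) * l : ℤ) + l := by rw [e1]; push_cast; ring
    _ ≤ x (i - k) + l := by linarith
    _ ≤ x i := h1

-- the sequence g n = -(n*k) tends to atBot when k ≥ 1
private lemma g_atBot {k : ℤ} (hk : 1 ≤ k) :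
    Tendsto (fun n : ℕ => -((n : ℤ) * k)) atTop atBot := by
  apply tendsto_atBot_mono (f := fun n : ℕ => -(n : ℤ)) (g := fun n : ℕ => -((n : ℤ) * k))
  · intro n
    have : (n : ℤ) ≤ (n : ℤ) * k := le_mul_of_one_le_right (Int.ofNat_nonneg n) hk
    omega
  · exact tendsto_neg_atBot_iff.mpr (tendsto_natCast_atTop_atTop (R := ℤ))

private lemma g_cast_atBot {k : ℤ} (hk : 1 ≤ k) :
    Tendsto (fun n : ℕ => ((-((n : ℤ) * k) : ℤ) : ℝ)) atTop atBot :=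
  intCast_atBot.comp (g_atBot hk)

private lemma ratio_tendsto {x : ℤ → ℝ} {ω : ℝ} (hR : HasRotNum x ω) {k : ℤ} (hk : 1 ≤ k) :
    Tendsto (fun n : ℕ => x (-((n : ℤ) * k)) / ((-((n : ℤ) * k) : ℤ) : ℝ)) atTop (𝓝 ω) :=
  hR.2.comp (g_atBot hk)

private lemma aux_tendsto (c : ℝ) {k : ℤ} (hk : 1 ≤ k) (d : ℝ) :
    Tendsto (fun n : ℕ => c / ((-((n : ℤ) * k) : ℤ) : ℝ) + d) atTop (𝓝 d) := by
  have h1 : Tendsto (fun n : ℕ => c / ((-((n : ℤ) * k) : ℤ) : ℝ)) atTop (𝓝 0) := by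
    simp only [div_eq_mul_inv]
    have h2 : Tendsto (fun n : ℕ => (-((-((n : ℤ) * k) : ℤ) : ℝ))⁻¹) atTop (𝓝 0) :=
      (tendsto_neg_atBot_atTop.comp (g_cast_atBot hk)).inv_tendsto_atTop
    have h3 : Tendsto (fun n : ℕ => (((-((n : ℤ) * k) : ℤ) : ℝ))⁻¹) atTop (𝓝 0) := by
      have := h2.neg
      simpa [inv_neg] using this
    simpa using h3.const_mul c
  simpa using h1.add tendsto_const_nhds

private lemma le_of_freq_le {f g : ℕ → ℝ} {a b : ℝ}
    (hf : Tendsto f atTop (𝓝 a)) (hg : Tendsto g atTop (𝓝 b))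
    (h : ∃ᶠ n in atTop, f n ≤ g n) : a ≤ b := by
  by_contra hba
  push_neg at hba
  obtain ⟨n, h1, h2⟩ := (h.and_eventually (hg.eventually_lt hf hba)).exists
  exact absurd h1 (not_le.mpr h2)

private lemma birkhoff_lower {x : ℤ → ℝ} {ω : ℝ} (hB : Birkhoff x) (hR : HasRotNum x ω)
    {k l : ℤ} (hk : 1 ≤ k) (hl : (l : ℝ) < ω * k) : ∀ i, x (i - k) + l ≤ x i := by
  have hkR : (0 : ℝ) < (k : ℝ) := by exact_mod_cast hk
  rcases hB k l 0 0 with h | h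
  · intro i
    have := h i
    simpa [tau] using this
  · exfalso
    have h' : ∀ i, x i ≤ x (i - k) + l := by
      intro i; have := h i; simpa [tau] using this
    have hiter := iter_le h'
    -- eventual inequality
    have hev : ∀ᶠ n : ℕ in atTop,
        x (-((n : ℤ) * k)) / ((-((n : ℤ) * k) : ℤ) : ℝ)
          ≤ x 0 / ((-((n : ℤ) * k) : ℤ) : ℝ) + (l : ℝ) / (k : ℝ) := by
      filter_upwards [eventually_ge_atTop 1] with n hn
      have hx0 := hiter n 0
      have e0 : (0 : ℤ) - (n : ℤ) * k = -((n : ℤ) * k) := by ring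
      rw [e0] at hx0
      have hnR : (1 : ℝ) ≤ (n : ℝ) := by exact_mod_cast hn
      have hG : ((-((n : ℤ) * k) : ℤ) : ℝ) = -((n : ℝ) * (k : ℝ)) := by push_cast; ring
      have hGneg : ((-((n : ℤ) * k) : ℤ) : ℝ) < 0 := by rw [hG]; nlinarith
      have hle : x 0 - ((n : ℤ) * l : ℤ) ≤ x (-((n : ℤ) * k)) := by
        have : (((n : ℤ) * l : ℤ) : ℝ) = (n : ℝ) * (l : ℝ) := by push_cast; ring
        linarith [hx0]
      have hdiv := (div_le_div_right_of_neg hGneg).mpr hle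
      refine hdiv.trans_eq ?_
      rw [hG]
      have hn0 : (n : ℝ) ≠ 0 := by linarith
      have hk0 : (k : ℝ) ≠ 0 := by linarith
      push_cast
      field_simp
      ring
    have := le_of_freq_le (ratio_tendsto hR hk) (aux_tendsto (x 0) hk ((l : ℝ) / (k : ℝ)))
      hev.frequently
    have h2 : ω * (k : ℝ) ≤ (l : ℝ) := (le_div_iff₀ hkR).mp this
    linarith

private lemma birkhoff_upper {x : ℤ → ℝ} {ω : ℝ} (hB : Birkhoff x) (hR : HasRotNum x ω)
    {k l : ℤ} (hk : 1 ≤ k) (hl : ω * k < (l : ℝ)) : ∀ i, x i ≤ x (i - k) + l := by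
  have hkR : (0 : ℝ) < (k : ℝ) := by exact_mod_cast hk
  rcases hB k l 0 0 with h | h
  · exfalso
    have h' : ∀ i, x (i - k) + l ≤ x i := by
      intro i; have := h i; simpa [tau] using this
    have hiter := iter_ge h'
    have hev : ∀ᶠ n : ℕ in atTop,
        x 0 / ((-((n : ℤ) * k) : ℤ) : ℝ) + (l : ℝ) / (k : ℝ)
          ≤ x (-((n : ℤ) * k)) / ((-((n : ℤ) * k) : ℤ) : ℝ) := by
      filter_upwards [eventually_ge_atTop 1] with n hn
      have hx0 := hiter n 0
      have e0 : (0 : ℤ) - (n : ℤ) * k = -((n : ℤ) * k) := by ring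
      rw [e0] at hx0
      have hnR : (1 : ℝ) ≤ (n : ℝ) := by exact_mod_cast hn
      have hG : ((-((n : ℤ) * k) : ℤ) : ℝ) = -((n : ℝ) * (k : ℝ)) := by push_cast; ring
      have hGneg : ((-((n : ℤ) * k) : ℤ) : ℝ) < 0 := by rw [hG]; nlinarith
      have hle : x (-((n : ℤ) * k)) ≤ x 0 - ((n : ℤ) * l : ℤ) := by
        have : (((n : ℤ) * l : ℤ) : ℝ) = (n : ℝ) * (l : ℝ) := by push_cast; ring
        linarith [hx0]
      have hdiv := (div_le_div_right_of_neg hGneg).mpr hle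
      refine Eq.trans_le ?_ hdiv
      rw [hG]
      have hn0 : (n : ℝ) ≠ 0 := by linarith
      have hk0 : (k : ℝ) ≠ 0 := by linarith
      push_cast
      field_simp
      ring
    have := le_of_freq_le (aux_tendsto (x 0) hk ((l : ℝ) / (k : ℝ))) (ratio_tendsto hR hk)
      hev.frequently
    have : (l : ℝ) ≤ ω * k := by
      rw [div_le_iff₀ hkR] at this
      linarith
    linarith
  · intro i
    have := h i
    simpa [tau] using this

private lemma birkhoff_diff_est {x : ℤ → ℝ} {ω : ℝ} (hB : Birkhoff x) (hR : HasRotNum x ω)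
    {k : ℤ} (hk : 1 ≤ k) (i : ℤ) : |x i - x (i - k) - ω * k| ≤ 2 := by
  set lu : ℤ := ⌈ω * (k : ℝ)⌉ + 1 with hlu
  set ld : ℤ := ⌊ω * (k : ℝ)⌋ - 1 with hld
  have h1 : ω * (k : ℝ) < (lu : ℝ) := by
    have := Int.le_ceil (ω * (k : ℝ))
    push_cast [hlu]; linarith
  have h2 : (lu : ℝ) ≤ ω * (k : ℝ) + 2 := by
    have := Int.ceil_lt_add_one (ω * (k : ℝ))
    push_cast [hlu]; linarith
  have h3 : (ld : ℝ) < ω * (k : ℝ) := by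
    have := Int.floor_le (ω * (k : ℝ))
    push_cast [hld]; linarith
  have h4 : ω * (k : ℝ) - 2 ≤ (ld : ℝ) := by
    have := Int.lt_floor_add_one (ω * (k : ℝ))
    push_cast [hld]; linarith
  have hu := birkhoff_upper hB hR hk h1 i
  have hd := birkhoff_lower hB hR hk h3 i
  rw [abs_le]
  constructor <;> linarith

private lemma birkhoff_est {x : ℤ → ℝ} {ω : ℝ} (hB : Birkhoff x) (hR : HasRotNum x ω)
    (n : ℤ) : |x n - x 0 - ω * n| ≤ 2 := by
  rcases lt_trichotomy n 0 with hn | hn | hn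
  · have hk : 1 ≤ -n := by omega
    have := birkhoff_diff_est hB hR hk 0
    have e : (0 : ℤ) - -n = n := by ring
    rw [e] at this
    have : |-(x n - x 0 - ω * n)| ≤ 2 := by
      convert this using 2
      push_cast; ring
    rwa [abs_neg] at this
  · simp [hn]
  · have := birkhoff_diff_est hB hR hn n
    simpa using this

private lemma hasRotNum_of_bound_s2 {x : ℤ → ℝ} {ω C : ℝ} (h : ∀ n : ℤ, |x n - ω * n| ≤ C) :
    HasRotNum x ω := by
  have habs_top : Tendsto (fun n : ℤ => |(n : ℝ)|) atTop atTop :=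
    tendsto_abs_atTop_atTop.comp tendsto_intCast_atTop_atTop
  have habs_bot : Tendsto (fun n : ℤ => |(n : ℝ)|) atBot atTop :=
    tendsto_abs_atBot_atTop.comp intCast_atBot
  have key : ∀ (F : Filter ℤ), F ≠ ⊥ → Tendsto (fun n : ℤ => |(n : ℝ)|) F atTop →
      (∀ᶠ n : ℤ in F, (n : ℝ) ≠ 0) →
      Tendsto (fun n : ℤ => x n / (n : ℝ)) F (𝓝 ω) := by
    intro F hF habs hne
    have h0 : Tendsto (fun n : ℤ => (x n - ω * n) / (n : ℝ)) F (𝓝 0) := by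
      apply squeeze_zero_norm' (a := fun n : ℤ => C * |(n : ℝ)|⁻¹)
      · filter_upwards [hne] with n hn
        have hpos : 0 < |(n : ℝ)| := abs_pos.mpr hn
        rw [Real.norm_eq_abs, abs_div, div_eq_mul_inv]
        exact mul_le_mul_of_nonneg_right (h n) (by positivity)
      · have := habs.inv_tendsto_atTop.const_mul C
        simpa using this
    have h1 : Tendsto (fun n : ℤ => (x n - ω * n) / (n : ℝ) + ω) F (𝓝 ω) := by
      simpa using h0.add (tendsto_const_nhds (α := ℤ) (x := ω) (f := F))
    apply h1.congr'
    filter_upwards [hne] with n hn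
    field_simp
    ring
  constructor
  · exact key atTop atTop_neBot.ne habs_top
      (by filter_upwards [eventually_ge_atTop 1] with n hn; exact_mod_cast (by omega : n ≠ 0))
  · exact key atBot atBot_neBot.ne habs_bot
      (by filter_upwards [eventually_le_atBot (-1)] with n hn; exact_mod_cast (by omega : n ≠ 0))

private lemma birkhoff_add_int {x : ℤ → ℝ} (h : Birkhoff x) (c : ℤ) :
    Birkhoff (fun i => x i + (c : ℝ)) := by
  intro k l k' l'
  rcases h k l k' l' with h' | h'
  · left; intro i; have := h' i; simp only [tau] at this ⊢; linarith
  · right; intro i; have := h' i; simp only [tau] at this ⊢; linarith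

private lemma inv_cast_top : Tendsto (fun n : ℤ => ((n : ℝ))⁻¹) atTop (𝓝 0) :=
  tendsto_intCast_atTop_atTop.inv_tendsto_atTop

private lemma inv_cast_bot : Tendsto (fun n : ℤ => ((n : ℝ))⁻¹) atBot (𝓝 0) := by
  have h2 : Tendsto (fun n : ℤ => (-(n : ℝ))⁻¹) atBot (𝓝 0) :=
    (tendsto_neg_atBot_atTop.comp intCast_atBot).inv_tendsto_atTop
  have := h2.neg
  simpa [inv_neg] using this

private lemma hasRotNum_add_const {x : ℤ → ℝ} {ω : ℝ} (h : HasRotNum x ω) (c : ℝ) :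
    HasRotNum (fun i => x i + c) ω := by
  constructor
  · have h1 := h.1.add (inv_cast_top.const_mul c)
    rw [mul_zero, add_zero] at h1
    refine h1.congr fun n => ?_
    rw [add_div, div_eq_mul_inv c]
  · have h1 := h.2.add (inv_cast_bot.const_mul c)
    rw [mul_zero, add_zero] at h1
    refine h1.congr fun n => ?_
    rw [add_div, div_eq_mul_inv c]

/-- For compact `K ⊂ ℝ`, the set of Birkhoff sequences with rotation number in
`K`, modulo integer vertical translations, is compact for pointwise convergence: every
sequence in `𝓑_K` admits integer translates of which a subsequence converges pointwise to
an element of `𝓑_K`. -/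
theorem birkhoff_mod_translation_compact
    (K : Set ℝ) (hK : IsCompact K) (x : ℕ → ℤ → ℝ)
    (hx : ∀ n, Birkhoff (x n) ∧ ∃ ω ∈ K, HasRotNum (x n) ω) :
    ∃ (m : ℕ → ℤ) (φ : ℕ → ℕ) (xinf : ℤ → ℝ), StrictMono φ ∧
      (Birkhoff xinf ∧ ∃ ω ∈ K, HasRotNum xinf ω) ∧
      ∀ i : ℤ, Filter.Tendsto (fun n => x (φ n) i + (m (φ n) : ℝ)) Filter.atTop (𝓝 (xinf i)) := by
  choose ω hωK hrot using fun n => (hx n).2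
  have hBx : ∀ n, Birkhoff (x n) := fun n => (hx n).1
  -- normalize by integer translations
  set m : ℕ → ℤ := fun n => -⌊x n 0⌋ with hm
  set y : ℕ → ℤ → ℝ := fun n i => x n i + (m n : ℝ) with hy
  have hBy : ∀ n, Birkhoff (y n) := fun n => birkhoff_add_int (hBx n) (m n)
  have hRy : ∀ n, HasRotNum (y n) (ω n) := fun n => hasRotNum_add_const (hrot n) (m n)
  have hy0 : ∀ n, 0 ≤ y n 0 ∧ y n 0 < 1 := by
    intro n
    have : y n 0 = Int.fract (x n 0) := by
      simp only [hy, hm]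
      rw [Int.fract]
      push_cast
      ring
    rw [this]
    exact ⟨Int.fract_nonneg _, Int.fract_lt_one _⟩
  -- bound on K
  obtain ⟨B, hB⟩ : ∃ B : ℝ, ∀ w ∈ K, |w| ≤ B := by
    obtain ⟨z, _, hmax⟩ := hK.exists_isMaxOn ⟨ω 0, hωK 0⟩ continuous_abs.continuousOn
    exact ⟨|z|, fun w hw => hmax hw⟩
  -- coordinatewise bounds
  have hbound : ∀ n i, |y n i| ≤ 3 + B * |(i : ℝ)| := by
    intro n i
    have h1 : |y n i - y n 0 - ω n * i| ≤ 2 := birkhoff_est (hBy n) (hRy n) i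
    have h2 : |y n 0| ≤ 1 := by
      rcases hy0 n with ⟨ha, hb⟩
      rw [abs_le]; constructor <;> linarith
    have h3 : |ω n * (i : ℝ)| ≤ B * |(i : ℝ)| := by
      rw [abs_mul]
      exact mul_le_mul_of_nonneg_right (hB _ (hωK n)) (abs_nonneg _)
    calc |y n i| = |(y n i - y n 0 - ω n * i) + y n 0 + ω n * i| := by ring_nf
    _ ≤ |y n i - y n 0 - ω n * i| + |y n 0| + |ω n * (i : ℝ)| := by
        apply (abs_add_le _ _).trans
        gcongr
        exact abs_add_le _ _
    _ ≤ 3 + B * |(i : ℝ)| := by linarith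
  -- compact product set
  set S : Set (ℝ × (ℤ → ℝ)) :=
    K ×ˢ Set.pi Set.univ (fun i : ℤ => Set.Icc (-(3 + B * |(i : ℝ)|)) (3 + B * |(i : ℝ)|)) with hS
  have hScomp : IsCompact S := hK.prod (isCompact_univ_pi fun i => isCompact_Icc)
  set u : ℕ → ℝ × (ℤ → ℝ) := fun n => (ω n, y n) with hu
  have humem : ∀ n, u n ∈ S := by
    intro n
    refine ⟨hωK n, fun i _ => ?_⟩
    exact abs_le.mp (hbound n i)
  obtain ⟨⟨Ω, xinf⟩, hmemS, φ, hφ, hconv⟩ := hScomp.tendsto_subseq humem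
  have hΩ : Tendsto (fun n => ω (φ n)) atTop (𝓝 Ω) :=
    ((continuous_fst.tendsto _).comp hconv)
  have hcoord : ∀ i, Tendsto (fun n => y (φ n) i) atTop (𝓝 (xinf i)) := fun i =>
    (((continuous_apply i).comp continuous_snd).tendsto _).comp hconv
  refine ⟨m, φ, xinf, hφ, ⟨?_, ?_⟩, fun i => hcoord i⟩
  · -- Birkhoff xinf
    intro k l k' l'
    have hcase : (∃ᶠ n : ℕ in atTop, tau k l (y (φ n)) ≤ tau k' l' (y (φ n))) ∨
        (∃ᶠ n : ℕ in atTop, tau k' l' (y (φ n)) ≤ tau k l (y (φ n))) :=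
      frequently_or_distrib.mp (Filter.Frequently.of_forall fun n => hBy (φ n) k l k' l')
    rcases hcase with hfreq | hfreq
    · left
      intro i
      refine le_of_freq_le (f := fun n => y (φ n) (i - k) + (l : ℝ))
        (g := fun n => y (φ n) (i - k') + (l' : ℝ))
        ((hcoord (i - k)).add tendsto_const_nhds) ((hcoord (i - k')).add tendsto_const_nhds)
        (hfreq.mono fun n hn => hn i)
    · right
      intro i
      refine le_of_freq_le (f := fun n => y (φ n) (i - k') + (l' : ℝ))
        (g := fun n => y (φ n) (i - k) + (l : ℝ))
        ((hcoord (i - k')).add tendsto_const_nhds) ((hcoord (i - k)).add tendsto_const_nhds)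
        (hfreq.mono fun n hn => hn i)
  · -- rotation number
    refine ⟨Ω, hmemS.1, ?_⟩
    have hest : ∀ i : ℤ, |xinf i - xinf 0 - Ω * i| ≤ 2 := by
      intro i
      have hT : Tendsto (fun n => |y (φ n) i - y (φ n) 0 - ω (φ n) * i|) atTop
          (𝓝 |xinf i - xinf 0 - Ω * i|) :=
        (((hcoord i).sub (hcoord 0)).sub (hΩ.mul_const (i : ℝ))).abs
      exact le_of_tendsto hT (Filter.Eventually.of_forall fun n =>
        birkhoff_est (hBy (φ n)) (hRy (φ n)) i)
    apply hasRotNum_of_bound_s2 (C := 2 + |xinf 0|)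
    intro i
    calc |xinf i - Ω * i| = |(xinf i - xinf 0 - Ω * i) + xinf 0| := by ring_nf
    _ ≤ |xinf i - xinf 0 - Ω * i| + |xinf 0| := abs_add_le _ _
    _ ≤ 2 + |xinf 0| := by linarith [hest i]
end

section
/- Let ω ∈ ℝ and let x be a Birkhoff sequence of rotation number ω. For integers k,l: if −ω·k + l > 0 then τ_{k,l}x ≥ x and τ_{k,l}x ≠ x, and if −ω·k + l < 0 then τ_{k,l}x ≤ x and τ_{k,l}x ≠ x. -/
open Filter Topology

lemma key_le (ω : ℝ) (x : ℤ → ℝ) (hrot : HasRotNum x ω) (k l : ℤ)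
    (h : tau k l x ≤ x) : -ω * (k : ℝ) + (l : ℝ) ≤ 0 := by
  have hiter : ∀ n : ℕ, ∀ i : ℤ, x (i - n * k) + (n : ℝ) * l ≤ x i := by
    intro n
    induction n with
    | zero => intro i; simp
    | succ n ih =>
      intro i
      have h1 := ih (i - k)
      have h2 := h i
      simp only [tau] at h2
      have : x (i - (n + 1 : ℕ) * k) = x (i - k - n * k) := by
        congr 1; push_cast; ring
      rw [this]
      push_cast
      linarith
  have hn : ∀ n : ℕ, x 0 + (n : ℝ) * l ≤ x ((n : ℤ) * k) := by
    intro n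
    have := hiter n ((n : ℤ) * k)
    simpa using this
  rcases lt_trichotomy k 0 with hk | hk | hk
  · -- k < 0 : use atBot limit
    have hmap : Tendsto (fun n : ℕ => (n : ℤ) * k) atTop atBot := by
      refine tendsto_atBot.2 fun b => eventually_atTop.2 ⟨(-b).toNat, fun n hn => ?_⟩
      have hb : -b ≤ (n : ℤ) := Int.toNat_le.mp hn
      have hk1 : k ≤ -1 := by omega
      nlinarith [Int.ofNat_nonneg n]
    have hcomp : Tendsto (fun n : ℕ => x ((n : ℤ) * k) / (((n : ℤ) * k : ℤ) : ℝ))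
        atTop (𝓝 ω) := hrot.2.comp hmap
    have hg : Tendsto (fun n : ℕ => x ((n : ℤ) * k) / (n : ℝ)) atTop (𝓝 (ω * k)) := by
      have := hcomp.mul_const (k : ℝ)
      refine this.congr' ?_
      filter_upwards [eventually_gt_atTop 0] with n hn0
      have hn' : (n : ℝ) ≠ 0 := by positivity
      have hk' : (k : ℝ) ≠ 0 := by exact_mod_cast hk.ne
      push_cast
      field_simp
    have hlb : Tendsto (fun n : ℕ => x 0 * (1 / (n : ℝ)) + l) atTop (𝓝 (l : ℝ)) := by
      have := (tendsto_const_nhds (x := x 0)).mul tendsto_one_div_atTop_nhds_zero_nat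
      simpa using this.add (tendsto_const_nhds (x := (l : ℝ)))
    have hle : (l : ℝ) ≤ ω * k := by
      refine le_of_tendsto_of_tendsto hlb hg ?_
      filter_upwards [eventually_gt_atTop 0] with n hn0
      have hnpos : (0 : ℝ) < n := by exact_mod_cast hn0
      have h1 : x 0 + (n : ℝ) * l ≤ x ((n : ℤ) * k) := hn n
      rw [le_div_iff₀ hnpos]
      have he : (x 0 * (1 / (n : ℝ)) + l) * n = x 0 + n * l := by
        field_simp
      rw [he]; exact h1
    linarith
  · -- k = 0
    subst hk
    have h1 := h 0
    simp only [tau, sub_zero] at h1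
    push_cast
    linarith
  · -- k > 0 : use atTop limit
    have hmap : Tendsto (fun n : ℕ => (n : ℤ) * k) atTop atTop := by
      refine tendsto_atTop.2 fun b => eventually_atTop.2 ⟨b.toNat, fun n hn => ?_⟩
      have hb : b ≤ (n : ℤ) := le_trans (Int.self_le_toNat b) (by exact_mod_cast hn)
      have hk1 : 1 ≤ k := hk
      nlinarith [Int.ofNat_nonneg n]
    have hcomp : Tendsto (fun n : ℕ => x ((n : ℤ) * k) / (((n : ℤ) * k : ℤ) : ℝ))
        atTop (𝓝 ω) := hrot.1.comp hmap
    have hg : Tendsto (fun n : ℕ => x ((n : ℤ) * k) / (n : ℝ)) atTop (𝓝 (ω * k)) := by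
      have := hcomp.mul_const (k : ℝ)
      refine this.congr' ?_
      filter_upwards [eventually_gt_atTop 0] with n hn0
      have hn' : (n : ℝ) ≠ 0 := by positivity
      have hk' : (k : ℝ) ≠ 0 := by exact_mod_cast hk.ne'
      push_cast
      field_simp
    have hlb : Tendsto (fun n : ℕ => x 0 * (1 / (n : ℝ)) + l) atTop (𝓝 (l : ℝ)) := by
      have := (tendsto_const_nhds (x := x 0)).mul tendsto_one_div_atTop_nhds_zero_nat
      simpa using this.add (tendsto_const_nhds (x := (l : ℝ)))
    have hle : (l : ℝ) ≤ ω * k := by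
      refine le_of_tendsto_of_tendsto hlb hg ?_
      filter_upwards [eventually_gt_atTop 0] with n hn0
      have hnpos : (0 : ℝ) < n := by exact_mod_cast hn0
      have h1 : x 0 + (n : ℝ) * l ≤ x ((n : ℤ) * k) := hn n
      rw [le_div_iff₀ hnpos]
      have he : (x 0 * (1 / (n : ℝ)) + l) * n = x 0 + n * l := by
        field_simp
      rw [he]; exact h1
    linarith

lemma key_ge (ω : ℝ) (x : ℤ → ℝ) (hrot : HasRotNum x ω) (k l : ℤ)
    (h : x ≤ tau k l x) : 0 ≤ -ω * (k : ℝ) + (l : ℝ) := by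
  have h' : tau (-k) (-l) x ≤ x := by
    intro i
    have := h (i + k)
    simp only [tau] at this ⊢
    simp only [add_sub_cancel_right] at this
    push_cast
    have : x (i + k) ≤ x i + l := this
    have hik : i - -k = i + k := by ring
    rw [hik]
    linarith
  have := key_le ω x hrot (-k) (-l) h'
  push_cast at this
  linarith

/-- For a Birkhoff sequence `x` of rotation number `ω`: if `-ωk + l > 0` then
`τ_{k,l} x ≥ x` and `τ_{k,l} x ≠ x`; if `-ωk + l < 0` then `τ_{k,l} x ≤ x` and
`τ_{k,l} x ≠ x`. -/
theorem birkhoff_ordering_from_rotation_number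
    (ω : ℝ) (x : ℤ → ℝ) (hB : Birkhoff x) (hrot : HasRotNum x ω) (k l : ℤ) :
    (0 < -ω * (k : ℝ) + (l : ℝ) → x ≤ tau k l x ∧ tau k l x ≠ x) ∧
    (-ω * (k : ℝ) + (l : ℝ) < 0 → tau k l x ≤ x ∧ tau k l x ≠ x) := by
  have htau0 : tau 0 0 x = x := by funext i; simp [tau]
  have hcmp : tau k l x ≤ x ∨ x ≤ tau k l x := by
    rcases hB k l 0 0 with h | h
    · left; rwa [htau0] at h
    · right; rwa [htau0] at h
  constructor
  · intro hpos
    have hle : x ≤ tau k l x := by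
      rcases hcmp with h | h
      · exact absurd (key_le ω x hrot k l h) (by linarith)
      · exact h
    refine ⟨hle, fun heq => ?_⟩
    have : tau k l x ≤ x := heq.le
    exact absurd (key_le ω x hrot k l this) (by linarith)
  · intro hneg
    have hle : tau k l x ≤ x := by
      rcases hcmp with h | h
      · exact h
      · exact absurd (key_ge ω x hrot k l h) (by linarith)
    refine ⟨hle, fun heq => ?_⟩
    have : x ≤ tau k l x := heq.ge
    exact absurd (key_ge ω x hrot k l this) (by linarith)
end

section
/- For every n ∈ ℕ with n ≥ 1 and every (p,q) ∈ ℕ×ℤ with p ≥ 1, the set of Birkhoff sequences that are (np,nq)-periodic equals the set of Birkhoff sequences that are (p,q)-periodic: 𝓑_{np,nq} = 𝓑_{p,q}. In other words, the periods of a periodic Birkhoff sequence can be chosen relatively prime. -/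
open Filter Topology

lemma tau_comp (k l k' l' : ℤ) (x : ℤ → ℝ) :
    tau k l (tau k' l' x) = tau (k + k') (l + l') x := by
  funext i
  simp only [tau, sub_sub]
  push_cast
  ring

lemma tau_zero (x : ℤ → ℝ) : tau 0 0 x = x := by
  funext i; simp [tau]

lemma tau_mono (k l : ℤ) {x y : ℤ → ℝ} (h : x ≤ y) : tau k l x ≤ tau k l y := by
  intro i
  simp only [tau]
  exact add_le_add (h _) (le_refl _)

/-- Periodic Birkhoff sequences are as periodic as they can be:
`𝓑_{np,nq} = 𝓑_{p,q}` for every `n ≥ 1`. -/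
theorem birkhoff_periods_relatively_prime
    (n p : ℕ) (hn : 1 ≤ n) (hp : 1 ≤ p) (q : ℤ) :
    {x : ℤ → ℝ | Birkhoff x ∧ tau ((n * p : ℕ) : ℤ) ((n : ℤ) * q) x = x} =
    {x : ℤ → ℝ | Birkhoff x ∧ tau (p : ℤ) q x = x} := by
  ext x
  simp only [Set.mem_setOf_eq]
  constructor
  · rintro ⟨hB, hper⟩
    refine ⟨hB, ?_⟩
    -- Birkhoff: τ_{p,q} x is comparable to x
    have hcomp : tau (p : ℤ) q x ≤ x ∨ x ≤ tau (p : ℤ) q x := by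
      have := hB (p : ℤ) q 0 0
      rw [tau_zero] at this
      exact this
    -- iterated inequality lemma
    have key : ∀ (h : tau (p : ℤ) q x ≤ x) (m : ℕ),
        tau (((m + 1 : ℕ) : ℤ) * p) (((m + 1 : ℕ) : ℤ) * q) x ≤ tau (p : ℤ) q x := by
      intro h m
      induction m with
      | zero => simp
      | succ m ih =>
        have h1 : tau (((m + 2 : ℕ) : ℤ) * p) (((m + 2 : ℕ) : ℤ) * q) x
            = tau (p : ℤ) q (tau (((m + 1 : ℕ) : ℤ) * p) (((m + 1 : ℕ) : ℤ) * q) x) := by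
          rw [tau_comp]; push_cast; ring_nf
        rw [h1]
        calc tau (p : ℤ) q (tau (((m + 1 : ℕ) : ℤ) * p) (((m + 1 : ℕ) : ℤ) * q) x)
            ≤ tau (p : ℤ) q (tau (p : ℤ) q x) := tau_mono _ _ ih
          _ ≤ tau (p : ℤ) q x := tau_mono _ _ h
    have key' : ∀ (h : x ≤ tau (p : ℤ) q x) (m : ℕ),
        tau (p : ℤ) q x ≤ tau (((m + 1 : ℕ) : ℤ) * p) (((m + 1 : ℕ) : ℤ) * q) x := by
      intro h m
      induction m with
      | zero => simp
      | succ m ih =>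
        have h1 : tau (((m + 2 : ℕ) : ℤ) * p) (((m + 2 : ℕ) : ℤ) * q) x
            = tau (p : ℤ) q (tau (((m + 1 : ℕ) : ℤ) * p) (((m + 1 : ℕ) : ℤ) * q) x) := by
          rw [tau_comp]; push_cast; ring_nf
        rw [h1]
        calc tau (p : ℤ) q x
            ≤ tau (p : ℤ) q (tau (p : ℤ) q x) := tau_mono _ _ h
          _ ≤ tau (p : ℤ) q (tau (((m + 1 : ℕ) : ℤ) * p) (((m + 1 : ℕ) : ℤ) * q) x) :=
              tau_mono _ _ ih
    obtain ⟨m, rfl⟩ : ∃ m : ℕ, n = m + 1 := ⟨n - 1, by omega⟩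
    have hper' : tau (((m + 1 : ℕ) : ℤ) * p) (((m + 1 : ℕ) : ℤ) * q) x = x := by
      have : ((((m + 1) * p : ℕ) : ℤ)) = ((m + 1 : ℕ) : ℤ) * p := by push_cast; ring
      rw [← this]; exact hper
    rcases hcomp with h | h
    · refine le_antisymm h ?_
      have := key h m
      rw [hper'] at this
      exact this
    · refine le_antisymm ?_ h
      have := key' h m
      rw [hper'] at this
      exact this
  · rintro ⟨hB, hper⟩
    refine ⟨hB, ?_⟩
    have : ∀ m : ℕ, tau ((m : ℤ) * p) ((m : ℤ) * q) x = x := by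
      intro m
      induction m with
      | zero => simp [tau_zero]
      | succ m ih =>
        have h1 : tau (((m + 1 : ℕ) : ℤ) * p) (((m + 1 : ℕ) : ℤ) * q) x
            = tau (p : ℤ) q (tau ((m : ℕ) * p) ((m : ℕ) * q) x) := by
          rw [tau_comp]; push_cast; ring_nf
        rw [h1, ih, hper]
    have h := this n
    have heq : (((n * p : ℕ) : ℤ)) = (n : ℤ) * p := by push_cast; ring
    rw [heq]
    exact h
end

section
/- Let (p,q) ∈ ℕ×ℤ with p ≥ 1, let (k,l) ∈ ℤ×ℤ and let x ∈ X_{p,q}. Then Σ_{i=1}^{p} |(τ_{k,l}x − x)_i| ≥ |pl − qk|, with equality when x is moreover a Birkhoff sequence. Consequently, the induced action of (ℤ×ℤ)/J_{p,q} on X_{p,q}, where J_{p,q} = {(np,nq) : n ∈ ℤ}, is free if and only if p and q are relatively prime. -/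
open Filter Topology

section Aux
lemma sum_step (x : ℤ → ℝ) (p : ℕ) (hp : 1 ≤ p) (q : ℤ)
    (hx : ∀ i, x (i - (p:ℤ)) + (q:ℝ) = x i) (k : ℤ) :
    ∑ i ∈ Finset.Icc (1:ℤ) (p:ℤ), x (i - (k+1))
      = ∑ i ∈ Finset.Icc (1:ℤ) (p:ℤ), x (i - k) - (q:ℝ) := by
  have hmap : (Finset.Icc (1:ℤ) (p:ℤ)).map (addRightEmbedding (-1))
      = Finset.Icc (0:ℤ) ((p:ℤ)-1) := by
    rw [Finset.map_add_right_Icc]; congr 1 <;> ring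
  have h1 : ∑ i ∈ Finset.Icc (1:ℤ) (p:ℤ), x (i - (k+1))
      = ∑ i ∈ Finset.Icc (0:ℤ) ((p:ℤ)-1), x (i - k) := by
    rw [← hmap, Finset.sum_map]
    apply Finset.sum_congr rfl
    intro i _
    simp [addRightEmbedding]
    ring_nf
  have e1 : Finset.Icc (0:ℤ) ((p:ℤ)-1) = insert 0 (Finset.Icc (1:ℤ) ((p:ℤ)-1)) := by
    ext i; simp [Finset.mem_Icc]; omega
  have e2 : Finset.Icc (1:ℤ) (p:ℤ) = insert (p:ℤ) (Finset.Icc (1:ℤ) ((p:ℤ)-1)) := by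
    ext i; simp [Finset.mem_Icc]; omega
  have h0 : (0:ℤ) ∉ Finset.Icc (1:ℤ) ((p:ℤ)-1) := by simp
  have hP : (p:ℤ) ∉ Finset.Icc (1:ℤ) ((p:ℤ)-1) := by simp [Finset.mem_Icc]
  have key : x ((0:ℤ) - k) = x ((p:ℤ) - k) - q := by
    have := hx ((p:ℤ) - k)
    have harg : (p:ℤ) - k - (p:ℤ) = 0 - k := by ring
    rw [harg] at this
    linarith
  rw [h1, e1, Finset.sum_insert h0, key]
  rw [show (∑ i ∈ Finset.Icc (1:ℤ) (p:ℤ), x (i - k))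
      = x ((p:ℤ) - k) + ∑ i ∈ Finset.Icc (1:ℤ) ((p:ℤ)-1), x (i - k) from by
    rw [e2, Finset.sum_insert hP]]
  ring

lemma sum_shift (x : ℤ → ℝ) (p : ℕ) (hp : 1 ≤ p) (q : ℤ)
    (hx : ∀ i, x (i - (p:ℤ)) + (q:ℝ) = x i) (k : ℤ) :
    ∑ i ∈ Finset.Icc (1:ℤ) (p:ℤ), x (i - k)
      = (∑ i ∈ Finset.Icc (1:ℤ) (p:ℤ), x i) - (q:ℝ) * k := by
  induction k using Int.induction_on with
  | zero => simp
  | succ n ih =>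
      rw [sum_step x p hp q hx n, ih]; push_cast; ring
  | pred n ih =>
      have hstep := sum_step x p hp q hx (-(n:ℤ)-1)
      rw [show (-(n:ℤ)-1) + 1 = -(n:ℤ) from by ring] at hstep
      push_cast at ih ⊢
      linarith

lemma sum_diff (x : ℤ → ℝ) (p : ℕ) (hp : 1 ≤ p) (q : ℤ)
    (hx : tau (p:ℤ) q x = x) (k l : ℤ) :
    ∑ i ∈ Finset.Icc (1:ℤ) (p:ℤ), (tau k l x i - x i)
      = (p:ℝ) * l - (q:ℝ) * k := by
  have hx' : ∀ i, x (i - (p:ℤ)) + (q:ℝ) = x i := fun i => congrFun hx i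
  have hcard : (Finset.Icc (1:ℤ) (p:ℤ)).card = p := by
    rw [Int.card_Icc]; omega
  have : ∑ i ∈ Finset.Icc (1:ℤ) (p:ℤ), (tau k l x i - x i)
      = (∑ i ∈ Finset.Icc (1:ℤ) (p:ℤ), x (i - k)) + (p:ℝ)*l
        - ∑ i ∈ Finset.Icc (1:ℤ) (p:ℤ), x i := by
    simp only [tau]
    rw [Finset.sum_sub_distrib, Finset.sum_add_distrib, Finset.sum_const, hcard]
    push_cast; ring
  rw [this, sum_shift x p hp q hx' k]; ring

lemma sum_abs_part1 (p : ℕ) (hp : 1 ≤ p) (q : ℤ) (k l : ℤ) (x : ℤ → ℝ)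
    (hx : tau (p:ℤ) q x = x) :
    |(p : ℝ) * (l : ℝ) - (q : ℝ) * (k : ℝ)| ≤
      ∑ i ∈ Finset.Icc (1 : ℤ) (p : ℤ), |tau k l x i - x i| := by
  rw [← sum_diff x p hp q hx k l]
  exact Finset.abs_sum_le_sum_abs _ _

lemma sum_abs_part2 (p : ℕ) (hp : 1 ≤ p) (q : ℤ) (k l : ℤ) (x : ℤ → ℝ)
    (hx : tau (p:ℤ) q x = x) (hB : Birkhoff x) :
    ∑ i ∈ Finset.Icc (1 : ℤ) (p : ℤ), |tau k l x i - x i| =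
      |(p : ℝ) * (l : ℝ) - (q : ℝ) * (k : ℝ)| := by
  have hsum := sum_diff x p hp q hx k l
  rcases hB k l 0 0 with h | h
  · have h' : ∀ i, tau k l x i - x i ≤ 0 := by
      intro i; have := h i; simp [tau] at this ⊢; linarith
    have : ∑ i ∈ Finset.Icc (1 : ℤ) (p : ℤ), |tau k l x i - x i|
        = -∑ i ∈ Finset.Icc (1 : ℤ) (p : ℤ), (tau k l x i - x i) := by
      rw [← Finset.sum_neg_distrib]
      exact Finset.sum_congr rfl fun i _ => abs_of_nonpos (h' i)
    rw [this, hsum]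
    rw [abs_of_nonpos]
    rw [← hsum]
    exact Finset.sum_nonpos fun i _ => h' i
  · have h' : ∀ i, 0 ≤ tau k l x i - x i := by
      intro i; have := h i; simp [tau] at this ⊢; linarith
    have : ∑ i ∈ Finset.Icc (1 : ℤ) (p : ℤ), |tau k l x i - x i|
        = ∑ i ∈ Finset.Icc (1 : ℤ) (p : ℤ), (tau k l x i - x i) :=
      Finset.sum_congr rfl fun i _ => abs_of_nonneg (h' i)
    rw [this, hsum, abs_of_nonneg]
    rw [← hsum]
    exact Finset.sum_nonneg fun i _ => h' i

end Aux

/-- For `x ∈ X_{p,q}`, `∑_{i=1}^p |(τ_{k,l}x - x)_i| ≥ |pl - qk|`, with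
equality for Birkhoff `x`; consequently the induced action of `(ℤ×ℤ)/J_{p,q}` on `X_{p,q}`
is free iff `p` and `q` are relatively prime. -/
theorem shift_action_l1_bound_and_freeness (p : ℕ) (hp : 1 ≤ p) (q : ℤ) :
    (∀ k l : ℤ, ∀ x : ℤ → ℝ, tau (p : ℤ) q x = x →
      |(p : ℝ) * (l : ℝ) - (q : ℝ) * (k : ℝ)| ≤
        ∑ i ∈ Finset.Icc (1 : ℤ) (p : ℤ), |tau k l x i - x i|) ∧
    (∀ k l : ℤ, ∀ x : ℤ → ℝ, tau (p : ℤ) q x = x → Birkhoff x →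
      ∑ i ∈ Finset.Icc (1 : ℤ) (p : ℤ), |tau k l x i - x i| =
        |(p : ℝ) * (l : ℝ) - (q : ℝ) * (k : ℝ)|) ∧
    ((∀ k l : ℤ, ∀ x : ℤ → ℝ, tau (p : ℤ) q x = x → tau k l x = x →
        ∃ n : ℤ, k = n * (p : ℤ) ∧ l = n * q) ↔ IsCoprime (p : ℤ) q) := by
  constructor
  · intro k l x hx
    exact sum_abs_part1 p hp q k l x hx
  constructor
  · intro k l x hx hB
    exact sum_abs_part2 p hp q k l x hx hB
  constructor
  · -- freeness → coprime
    intro H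
    set d : ℤ := (Int.gcd (p:ℤ) q : ℤ) with hd
    have hdp : d ∣ (p:ℤ) := Int.gcd_dvd_left _ _
    have hdq : d ∣ q := Int.gcd_dvd_right _ _
    have hpne : (p:ℤ) ≠ 0 := by positivity
    have hdne : d ≠ 0 := by
      simp [hd, Int.gcd_eq_zero_iff]
      intro h; omega
    obtain ⟨k, hk⟩ := hdp
    obtain ⟨l, hl⟩ := hdq
    set x : ℤ → ℝ := fun i => (q:ℝ) / (p:ℝ) * i with hxdef
    have hpR : ((p:ℤ):ℝ) ≠ 0 := by exact_mod_cast hpne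
    have hx : tau (p:ℤ) q x = x := by
      funext i
      simp only [tau, hxdef]
      push_cast
      field_simp
      ring
    have hpl : (p:ℤ) * l = q * k := by
      have : d * k * l = d * l * k := by ring
      rw [← hk, ← hl] at this; linarith
    have hxk : tau k l x = x := by
      funext i
      simp only [tau, hxdef]
      have : ((p:ℤ):ℝ) * l = (q:ℝ) * k := by exact_mod_cast hpl
      push_cast at this ⊢
      field_simp
      nlinarith [this]
    obtain ⟨n, hn, -⟩ := H k l x hx hxk
    have : (p:ℤ) = n * (p:ℤ) * d := by
      rw [hk] at *; nlinarith [hn]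
    have hnd : n * d = 1 := by
      have := mul_left_cancel₀ hpne (a := (p:ℤ)) (by linarith : (p:ℤ) * 1 = (p:ℤ) * (n * d))
      omega
    have hd1 : d = 1 := by
      have hdnn : 0 ≤ d := by simp [hd]
      have hu := Int.isUnit_iff.mp (IsUnit.of_mul_eq_one (a := d) n (by linarith : d * n = 1))
      omega
    rw [Int.isCoprime_iff_gcd_eq_one]
    omega
  · -- coprime → freeness
    intro hcop k l x hx hxk
    have h1 := sum_abs_part1 p hp q k l x hx
    have hz : ∑ i ∈ Finset.Icc (1 : ℤ) (p : ℤ), |tau k l x i - x i| = 0 := by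
      apply Finset.sum_eq_zero
      intro i _
      rw [hxk]
      simp
    rw [hz] at h1
    have habs : (p : ℝ) * (l : ℝ) - (q : ℝ) * (k : ℝ) = 0 := by
      have := abs_nonneg ((p : ℝ) * (l : ℝ) - (q : ℝ) * (k : ℝ))
      have := abs_eq_zero.mp (le_antisymm h1 this)
      exact this
    have hpl : (p:ℤ) * l = q * k := by exact_mod_cast sub_eq_zero.mp habs
    have hdvd : (p:ℤ) ∣ k := by
      apply hcop.dvd_of_dvd_mul_left
      exact ⟨l, by linarith⟩
    obtain ⟨n, hn⟩ := hdvd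
    refine ⟨n, by linarith [hn], ?_⟩
    have hpne : (p:ℤ) ≠ 0 := by positivity
    have : (p:ℤ) * l = (p:ℤ) * (n * q) := by rw [hpl, hn]; ring
    exact mul_left_cancel₀ hpne this
end

section
/- Let (p,q) ∈ ℕ×ℤ be relatively prime with p ≥ 1, let y be a (p,q)-periodic Birkhoff sequence, and let r ≥ 1 and a ≥ 0 be integers. Let U_{p,q} := τ_{s,t} where s,t ∈ ℤ satisfy pt − qs = 1. Then there exists i_0 ∈ ℤ such that Σ_{j=i_0−r}^{i_0+r−1} |(U_{p,q}^a y)_j − y_j| ≤ 2r·a/p. -/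
open Filter Topology

lemma sum_Icc_shift (h : ℤ → ℝ) (a b c : ℤ) :
    ∑ j ∈ Finset.Icc (a + c) (b + c), h j = ∑ j ∈ Finset.Icc a b, h (j + c) := by
  rw [← Finset.map_add_right_Icc, Finset.sum_map]
  rfl

lemma sum_Icc_step (h : ℤ → ℝ) (p : ℕ) (hp : 1 ≤ p) (c : ℤ) :
    ∑ j ∈ Finset.Icc (c + 1) (c + 1 + p - 1), h j
      = ∑ j ∈ Finset.Icc c (c + p - 1), h j + h (c + p) - h c := by
  have e1 : Finset.Icc c (c + (p : ℤ)) = insert (c + p) (Finset.Icc c (c + p - 1)) := by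
    ext j; simp only [Finset.mem_Icc, Finset.mem_insert]; omega
  have e2 : Finset.Icc c (c + (p : ℤ)) = insert c (Finset.Icc (c + 1) (c + 1 + p - 1)) := by
    ext j; simp only [Finset.mem_Icc, Finset.mem_insert]; omega
  have n1 : (c + (p : ℤ)) ∉ Finset.Icc c (c + (p : ℤ) - 1) := by
    simp only [Finset.mem_Icc]; omega
  have n2 : c ∉ Finset.Icc (c + 1) (c + 1 + (p : ℤ) - 1) := by
    simp only [Finset.mem_Icc]; omega
  have := (e1 ▸ Finset.sum_insert n1 : ∑ j ∈ Finset.Icc c (c + (p:ℤ)), h j = _)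
  have := (e2 ▸ Finset.sum_insert n2 : ∑ j ∈ Finset.Icc c (c + (p:ℤ)), h j = _)
  linarith

lemma sum_quasiperiodic (h : ℤ → ℝ) (p : ℕ) (hp : 1 ≤ p) (d : ℝ)
    (hper : ∀ j : ℤ, h (j + p) = h j + d) (c : ℤ) :
    ∑ j ∈ Finset.Icc c (c + (p : ℤ) - 1), h j
      = ∑ j ∈ Finset.Icc (0 : ℤ) ((p : ℤ) - 1), h j + c * d := by
  let S : ℤ → ℝ := fun c => ∑ j ∈ Finset.Icc c (c + (p : ℤ) - 1), h j
  have step : ∀ c : ℤ, S (c + 1) = S c + d := by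
    intro c
    have h1 := sum_Icc_step h p hp c
    rw [hper c] at h1
    show ∑ j ∈ Finset.Icc (c + 1) (c + 1 + (p:ℤ) - 1), h j = _
    rw [h1]; ring
  suffices H : ∀ c : ℤ, S c = S 0 + c * d by
    have h0 : S 0 = ∑ j ∈ Finset.Icc (0 : ℤ) ((p : ℤ) - 1), h j := by
      show ∑ j ∈ Finset.Icc (0:ℤ) (0 + (p:ℤ) - 1), h j = _
      norm_num
    have := H c; rw [h0] at this; exact this
  intro c
  induction c using Int.induction_on with
  | zero => simp
  | succ c ih => rw [step, ih]; push_cast; ring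
  | pred c ih =>
      have hstep := step (-(c:ℤ) - 1)
      have e : (-(c:ℤ) - 1 + 1) = -(c:ℤ) := by ring
      rw [e] at hstep
      have h2 : S (-(c:ℤ) - 1) = S (-(c:ℤ)) - d := by linarith
      rw [h2, ih]; push_cast; ring

lemma tau_iter (s t : ℤ) (y : ℤ → ℝ) (a : ℕ) :
    (tau s t)^[a] y = tau ((a : ℤ) * s) ((a : ℤ) * t) y := by
  induction a with
  | zero => funext i; simp [tau]
  | succ a ih =>
      rw [Function.iterate_succ_apply', ih]
      funext i
      simp only [tau]
      have e : i - s - (a : ℤ) * s = i - ((a : ℤ) + 1) * s := by ring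
      push_cast
      rw [e]; ring

/-- For a `(p,q)`-periodic Birkhoff sequence `y` (with `p,q` relatively prime,
witnessed by `pt - qs = 1` and `U_{p,q} = τ_{s,t}`), and integers `r ≥ 1`, `a ≥ 0`, there is
an `i₀` with `∑_{j=i₀-r}^{i₀+r-1} |(U_{p,q}^a y)_j - y_j| ≤ 2ra/p`. -/
theorem pigeonhole_translate_estimate
    (p : ℕ) (hp : 1 ≤ p) (q s t : ℤ) (hst : (p : ℤ) * t - q * s = 1)
    (y : ℤ → ℝ) (hyB : Birkhoff y) (hyper : tau (p : ℤ) q y = y)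
    (r : ℕ) (hr : 1 ≤ r) (a : ℕ) :
    ∃ i0 : ℤ, ∑ j ∈ Finset.Icc (i0 - (r : ℤ)) (i0 + (r : ℤ) - 1),
        |(tau s t)^[a] y j - y j| ≤ 2 * (r : ℝ) * (a : ℝ) / (p : ℝ) := by
  rcases Nat.eq_zero_or_pos a with ha | ha
  · subst ha
    refine ⟨0, ?_⟩
    simp
  set f : ℤ → ℝ := fun j => (tau s t)^[a] y j - y j with hf
  have hz : ∀ j : ℤ, f j = y (j + -((a:ℤ) * s)) + (((a:ℤ) * t : ℤ) : ℝ) - y j := by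
    intro j
    simp only [hf, tau_iter s t y a, tau, sub_eq_add_neg]
  have hy : ∀ i : ℤ, y (i + p) = y i + (q : ℝ) := by
    intro i
    have h1 := congrFun hyper (i + p)
    simp only [tau] at h1
    have e : i + (p : ℤ) - p = i := by ring
    rw [e] at h1; linarith
  have hfper : ∀ j : ℤ, f (j + p) = f j + 0 := by
    intro j
    rw [hz, hz j]
    have e : j + (p : ℤ) + -((a:ℤ) * s) = (j + -((a:ℤ) * s)) + p := by ring
    rw [e, hy (j + -((a:ℤ) * s)), hy j]; ring
  -- period sum of f equals a
  have cardp : (Finset.Icc (0:ℤ) ((p:ℤ) - 1)).card = p := by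
    rw [Int.card_Icc]; omega
  have hsum : ∑ j ∈ Finset.Icc (0:ℤ) ((p:ℤ) - 1), f j = (a : ℝ) := by
    have shift := sum_Icc_shift y 0 ((p:ℤ) - 1) (-((a:ℤ) * s))
    have e1 : (0:ℤ) + (-((a:ℤ) * s)) = -((a:ℤ) * s) := by ring
    have e2 : ((p:ℤ) - 1) + (-((a:ℤ) * s)) = -((a:ℤ) * s) + (p:ℤ) - 1 := by ring
    rw [e1, e2] at shift
    have qper := sum_quasiperiodic y p hp (q : ℝ) hy (-((a:ℤ) * s))
    have expand : ∑ j ∈ Finset.Icc (0:ℤ) ((p:ℤ) - 1), f j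
        = (∑ j ∈ Finset.Icc (0:ℤ) ((p:ℤ) - 1), y (j + -((a:ℤ) * s)))
          + (Finset.Icc (0:ℤ) ((p:ℤ) - 1)).card * (((a:ℤ) * t : ℤ) : ℝ)
          - ∑ j ∈ Finset.Icc (0:ℤ) ((p:ℤ) - 1), y j := by
      rw [Finset.sum_congr rfl (fun j _ => hz j)]
      rw [Finset.sum_sub_distrib, Finset.sum_add_distrib, Finset.sum_const, nsmul_eq_mul]
    rw [expand, ← shift, qper, cardp]
    have : ((p:ℝ)) * (((a:ℤ) * t : ℤ) : ℝ) + (-((a:ℤ) * s) : ℤ) * (q : ℝ) = (a : ℝ) := by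
      have : ((a : ℤ) * ((p:ℤ) * t - q * s) : ℤ) = (a : ℤ) := by rw [hst]; ring
      have h2 : ((a:ℝ)) * ((p:ℝ) * (t:ℝ) - (q:ℝ) * (s:ℝ)) = (a:ℝ) := by exact_mod_cast this
      push_cast
      linear_combination h2
    push_cast at this ⊢
    linarith
  -- f is nonnegative
  have hfnn : ∀ j : ℤ, 0 ≤ f j := by
    have htau0 : tau 0 0 y = y := by funext i; simp [tau]
    rcases hyB ((a:ℤ) * s) ((a:ℤ) * t) 0 0 with hle | hle
    · exfalso
      rw [htau0] at hle
      have hle' : ∀ j, f j ≤ 0 := by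
        intro j
        have := hle j
        simp only [hf, tau_iter s t y a]
        linarith
      have : ∑ j ∈ Finset.Icc (0:ℤ) ((p:ℤ) - 1), f j ≤ 0 :=
        Finset.sum_nonpos (fun j _ => hle' j)
      rw [hsum] at this
      have : (0:ℝ) < a := by exact_mod_cast ha
      linarith
    · rw [htau0] at hle
      intro j
      have := hle j
      simp only [hf, tau_iter s t y a]
      linarith
  -- window sums
  have hwin : ∀ k : ℤ, ∑ j ∈ Finset.Icc (0:ℤ) ((p:ℤ) - 1), f (j + k) = (a : ℝ) := by
    intro k
    have shift := sum_Icc_shift f 0 ((p:ℤ) - 1) k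
    have e1 : (0:ℤ) + k = k := by ring
    have e2 : ((p:ℤ) - 1) + k = k + (p:ℤ) - 1 := by ring
    rw [e1, e2] at shift
    have qper := sum_quasiperiodic f p hp 0 hfper k
    rw [← shift, qper, hsum]; ring
  have hdouble : ∑ i0 ∈ Finset.Icc (0:ℤ) ((p:ℤ) - 1),
      (∑ j ∈ Finset.Icc (i0 - (r:ℤ)) (i0 + (r:ℤ) - 1), f j) = 2 * (r:ℝ) * (a:ℝ) := by
    have hre : ∀ i0 : ℤ, ∑ j ∈ Finset.Icc (i0 - (r:ℤ)) (i0 + (r:ℤ) - 1), f j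
        = ∑ k ∈ Finset.Icc (-(r:ℤ)) ((r:ℤ) - 1), f (k + i0) := by
      intro i0
      have shift := sum_Icc_shift f (-(r:ℤ)) ((r:ℤ) - 1) i0
      have e1 : (-(r:ℤ)) + i0 = i0 - (r:ℤ) := by ring
      have e2 : ((r:ℤ) - 1) + i0 = i0 + (r:ℤ) - 1 := by ring
      rw [e1, e2] at shift
      exact shift
    rw [Finset.sum_congr rfl (fun i0 _ => hre i0), Finset.sum_comm]
    have inner : ∀ k : ℤ, ∑ i0 ∈ Finset.Icc (0:ℤ) ((p:ℤ) - 1), f (k + i0) = (a : ℝ) := by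
      intro k
      rw [Finset.sum_congr rfl (fun i0 _ => by rw [add_comm k i0])]
      exact hwin k
    rw [Finset.sum_congr rfl (fun k _ => inner k), Finset.sum_const, nsmul_eq_mul]
    have : (Finset.Icc (-(r:ℤ)) ((r:ℤ) - 1)).card = 2 * r := by
      rw [Int.card_Icc]; omega
    rw [this]; push_cast; ring
  -- pigeonhole
  have hpnn : (0:ℝ) < p := by exact_mod_cast hp
  have hne : (Finset.Icc (0:ℤ) ((p:ℤ) - 1)).Nonempty := by
    refine ⟨0, ?_⟩; simp only [Finset.mem_Icc]; omega
  have hsum_le : ∑ i0 ∈ Finset.Icc (0:ℤ) ((p:ℤ) - 1),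
      (∑ j ∈ Finset.Icc (i0 - (r:ℤ)) (i0 + (r:ℤ) - 1), f j)
      ≤ ∑ _i0 ∈ Finset.Icc (0:ℤ) ((p:ℤ) - 1), (2 * (r:ℝ) * (a:ℝ) / (p:ℝ)) := by
    rw [hdouble, Finset.sum_const, cardp, nsmul_eq_mul]
    apply le_of_eq
    field_simp
  obtain ⟨i0, _, hi0⟩ := Finset.exists_le_of_sum_le hne hsum_le
  refine ⟨i0, ?_⟩
  calc ∑ j ∈ Finset.Icc (i0 - (r:ℤ)) (i0 + (r:ℤ) - 1), |(tau s t)^[a] y j - y j|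
      = ∑ j ∈ Finset.Icc (i0 - (r:ℤ)) (i0 + (r:ℤ) - 1), f j := by
        refine Finset.sum_congr rfl fun j _ => ?_
        rw [abs_of_nonneg (hfnn j)]
    _ ≤ _ := hi0
end

section
/- Let (p,q) ∈ ℕ×ℤ be relatively prime with p ≥ 1 and ω ∈ ℝ, and let U_{p,q} := τ_{s,t} with pt − qs = 1. Then for every maximally periodic Birkhoff sequence x of rotation number ω and all integers i_1 ≤ i_2, there exists a (p,q)-periodic Birkhoff sequence y such that y_j ≤ x_j ≤ (U_{p,q}^a y)_j for every i_1 ≤ j ≤ i_2, where a := ⌈(i_2 − i_1)·|q − ω·p|⌉. -/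
open Filter Topology

lemma birkhoff_order (ω : ℝ) (x : ℤ → ℝ) (hB : Birkhoff x) (hrot : HasRotNum x ω)
    (hmax : MaxPeriodic ω x) (k m : ℤ) (h : ω * (k : ℝ) ≤ (m : ℝ)) :
    ∀ i : ℤ, x i ≤ x (i - k) + (m : ℝ) := by
  rcases eq_or_lt_of_le h with heq | hlt
  · intro i
    have h2 := congrFun (hmax k m (by linarith)) i
    simp only [tau] at h2
    linarith
  · rcases hB 0 0 k m with h1 | h2
    · intro i
      have := h1 i
      simp only [tau, sub_zero, Int.cast_zero, add_zero] at this
      exact this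
    · exfalso
      have h2' : ∀ i : ℤ, x (i - k) + (m : ℝ) ≤ x i := by
        intro i
        have := h2 i
        simp only [tau, sub_zero, Int.cast_zero, add_zero] at this
        exact this
      rcases eq_or_ne k 0 with hk0 | hk0
      · subst hk0
        have := h2' 0
        simp only [sub_zero] at this
        have hm : (0:ℝ) < m := by simpa using hlt
        linarith
      · -- iterate
        have key : ∀ n : ℕ, ∀ i : ℤ, x (i - (n:ℤ)*k) + (n:ℝ)*(m:ℝ) ≤ x i := by
          intro n
          induction n with
          | zero => intro i; simp
          | succ n ih =>
            intro i
            have ha := h2' i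
            have hb := ih (i - k)
            have hidx : i - ((n:ℤ)+1)*k = i - k - (n:ℤ)*k := by ring
            push_cast
            push_cast at hb
            rw [hidx]
            linarith
        -- limits
        have hcomp : Tendsto (fun n : ℕ => x (-(n:ℤ)*k) / ((-(n:ℤ)*k : ℤ) : ℝ)) atTop (𝓝 ω) := by
          rcases hk0.lt_or_gt with hkneg | hkpos
          · have hφ : Tendsto (fun n : ℕ => -(n:ℤ)*k) atTop atTop := by
              apply tendsto_atTop_mono (f := fun n : ℕ => (n:ℤ)) _ tendsto_natCast_atTop_atTop
              intro n
              have hn : (0:ℤ) ≤ (n:ℤ) := Int.natCast_nonneg n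
              nlinarith
            exact hrot.1.comp hφ
          · have hφ : Tendsto (fun n : ℕ => -(n:ℤ)*k) atTop atBot := by
              have h1 : Tendsto (fun n : ℕ => (n:ℤ)*k) atTop atTop := by
                apply tendsto_atTop_mono (f := fun n : ℕ => (n:ℤ)) _ tendsto_natCast_atTop_atTop
                intro n
                have hn : (0:ℤ) ≤ (n:ℤ) := Int.natCast_nonneg n
                nlinarith
              have := tendsto_neg_atTop_atBot.comp h1
              refine this.congr (fun n => by simp [Function.comp])
            exact hrot.2.comp hφ
        have hk' : (k:ℝ) ≠ 0 := by exact_mod_cast hk0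
        have hmul := hcomp.mul_const (-(k:ℝ))
        have heq : ∀ᶠ n : ℕ in atTop,
            (x (-(n:ℤ)*k) / ((-(n:ℤ)*k : ℤ) : ℝ)) * (-(k:ℝ)) = x (-(n:ℤ)*k) / (n:ℝ) := by
          filter_upwards [eventually_ge_atTop 1] with n hn
          have hn' : (0:ℝ) < (n:ℝ) := by exact_mod_cast Nat.lt_of_lt_of_le Nat.zero_lt_one hn
          push_cast
          field_simp
        have T2 : Tendsto (fun n : ℕ => x (-(n:ℤ)*k) / (n:ℝ)) atTop (𝓝 (ω * -(k:ℝ))) :=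
          hmul.congr' heq
        have T3 : Tendsto (fun n : ℕ => x 0 / (n:ℝ) - (m:ℝ)) atTop (𝓝 (0 - (m:ℝ))) :=
          (tendsto_const_div_atTop_nhds_zero_nat (x 0)).sub_const (m:ℝ)
        have hineq : ∀ᶠ n : ℕ in atTop,
            x (-(n:ℤ)*k) / (n:ℝ) ≤ x 0 / (n:ℝ) - (m:ℝ) := by
          filter_upwards [eventually_ge_atTop 1] with n hn
          have hn' : (0:ℝ) < (n:ℝ) := by exact_mod_cast Nat.lt_of_lt_of_le Nat.zero_lt_one hn
          have := key n 0
          have hidx : (0:ℤ) - (n:ℤ)*k = -(n:ℤ)*k := by ring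
          rw [hidx] at this
          rw [div_sub' (ne_of_gt hn'), div_le_div_iff₀ hn' hn']
          nlinarith
        have hfin := le_of_tendsto_of_tendsto T2 T3 hineq
        nlinarith

/-- The set of orbit points below level `ξ`. -/
def hullSet (ω : ℝ) (x : ℤ → ℝ) (ξ : ℝ) : Set ℝ :=
  {v : ℝ | ∃ j l : ℤ, v = x j + (l : ℝ) ∧ (j : ℝ) * ω + (l : ℝ) ≤ ξ}

/-- The hull function of a Birkhoff sequence. -/
noncomputable def hull (ω : ℝ) (x : ℤ → ℝ) (ξ : ℝ) : ℝ := sSup (hullSet ω x ξ)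

lemma hullSet_nonempty (ω : ℝ) (x : ℤ → ℝ) (ξ : ℝ) : (hullSet ω x ξ).Nonempty := by
  refine ⟨x 0 + ((⌊ξ⌋ : ℤ) : ℝ), 0, ⌊ξ⌋, rfl, ?_⟩
  simpa using Int.floor_le ξ

lemma hullSet_bddAbove (ω : ℝ) (x : ℤ → ℝ) (hB : Birkhoff x) (hrot : HasRotNum x ω)
    (hmax : MaxPeriodic ω x) (ξ : ℝ) : BddAbove (hullSet ω x ξ) := by
  refine ⟨x 0 + ξ + 1, ?_⟩
  rintro v ⟨j, l, rfl, h⟩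
  have hfl : ω * (j : ℝ) ≤ ((⌊(j : ℝ) * ω⌋ + 1 : ℤ) : ℝ) := by
    push_cast
    have := Int.lt_floor_add_one ((j : ℝ) * ω)
    nlinarith [this]
  have hb := birkhoff_order ω x hB hrot hmax j (⌊(j : ℝ) * ω⌋ + 1) hfl j
  simp only [sub_self] at hb
  have hfl2 : ((⌊(j : ℝ) * ω⌋ : ℤ) : ℝ) ≤ (j : ℝ) * ω := Int.floor_le _
  push_cast at hb
  linarith

lemma hull_mono (ω : ℝ) (x : ℤ → ℝ) (hB : Birkhoff x) (hrot : HasRotNum x ω)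
    (hmax : MaxPeriodic ω x) {ξ η : ℝ} (h : ξ ≤ η) : hull ω x ξ ≤ hull ω x η := by
  apply csSup_le_csSup (hullSet_bddAbove ω x hB hrot hmax η) (hullSet_nonempty ω x ξ)
  rintro v ⟨j, l, hv, hle⟩
  exact ⟨j, l, hv, hle.trans h⟩

lemma hull_shift (ω : ℝ) (x : ℤ → ℝ) (hB : Birkhoff x) (hrot : HasRotNum x ω)
    (hmax : MaxPeriodic ω x) (ξ : ℝ) (l : ℤ) :
    hull ω x (ξ + (l : ℝ)) = hull ω x ξ + (l : ℝ) := by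
  apply le_antisymm
  · apply csSup_le (hullSet_nonempty ω x _)
    rintro v ⟨j, l', rfl, hjl⟩
    have hmem : x j + ((l' - l : ℤ) : ℝ) ∈ hullSet ω x ξ := by
      refine ⟨j, l' - l, rfl, ?_⟩
      push_cast
      linarith
    have := le_csSup (hullSet_bddAbove ω x hB hrot hmax ξ) hmem
    push_cast at this
    simp only [hull]
    linarith
  · have h1 : hull ω x ξ ≤ hull ω x (ξ + (l : ℝ)) - (l : ℝ) := by
      apply csSup_le (hullSet_nonempty ω x _)
      rintro v ⟨j, l', rfl, hjl⟩
      have hmem : x j + ((l' + l : ℤ) : ℝ) ∈ hullSet ω x (ξ + (l : ℝ)) := by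
        refine ⟨j, l' + l, rfl, ?_⟩
        push_cast
        linarith
      have := le_csSup (hullSet_bddAbove ω x hB hrot hmax _) hmem
      push_cast at this
      simp only [hull] at this ⊢
      linarith
    linarith

lemma hull_val (ω : ℝ) (x : ℤ → ℝ) (hB : Birkhoff x) (hrot : HasRotNum x ω)
    (hmax : MaxPeriodic ω x) (j : ℤ) : hull ω x ((j : ℝ) * ω) = x j := by
  apply le_antisymm
  · apply csSup_le (hullSet_nonempty ω x _)
    rintro v ⟨j', l', rfl, h⟩
    have hcond : ω * ((j' - j : ℤ) : ℝ) ≤ ((-l' : ℤ) : ℝ) := by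
      push_cast
      nlinarith [h]
    have hb := birkhoff_order ω x hB hrot hmax (j' - j) (-l') hcond j'
    simp only [sub_sub_cancel] at hb
    push_cast at hb
    linarith
  · apply le_csSup (hullSet_bddAbove ω x hB hrot hmax _)
    exact ⟨j, 0, by simp, by simp⟩

/-- Confinement: a maximally periodic Birkhoff sequence `x` of rotation number
`ω` can be squeezed, on any segment `[i₁, i₂]`, between a `(p,q)`-periodic Birkhoff sequence
`y` and its translate `U_{p,q}^a y`, where `a = ⌈(i₂-i₁)|q - ωp|⌉`. -/
theorem confinement
    (p : ℕ) (hp : 1 ≤ p) (q s t : ℤ) (hst : (p : ℤ) * t - q * s = 1) (ω : ℝ)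
    (x : ℤ → ℝ) (hB : Birkhoff x) (hrot : HasRotNum x ω) (hmax : MaxPeriodic ω x)
    (i1 i2 : ℤ) (h12 : i1 ≤ i2) :
    ∃ y : ℤ → ℝ, Birkhoff y ∧ tau (p : ℤ) q y = y ∧
      ∀ j : ℤ, i1 ≤ j → j ≤ i2 →
        y j ≤ x j ∧
        x j ≤ (tau s t)^[(⌈((i2 : ℝ) - (i1 : ℝ)) * |(q : ℝ) - ω * (p : ℝ)|⌉).toNat] y j := by
  have hp0 : (0:ℝ) < (p:ℝ) := by exact_mod_cast Nat.lt_of_lt_of_le Nat.zero_lt_one hp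
  set ρ : ℝ := (q : ℝ) / (p : ℝ) with hρdef
  have hρp : ρ * (p:ℝ) = (q:ℝ) := div_mul_cancel₀ _ (ne_of_gt hp0)
  set i0 : ℤ := if ρ ≤ ω then i1 else i2 with hi0
  set u : ℤ → ℝ := fun j => ρ * ((j:ℝ) - (i0:ℝ)) + ω * (i0:ℝ) with hu
  have hushift : ∀ i k : ℤ, u (i - k) = u i - ρ * (k:ℝ) := by
    intro i k
    simp only [hu]
    push_cast
    ring
  set Y : ℤ → ℝ := fun j => hull ω x (u j) with hY
  have htau_form : ∀ k l : ℤ, ∀ i : ℤ, tau k l Y i = hull ω x (u i + (-(ρ * (k:ℝ)) + (l:ℝ))) := by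
    intro k l i
    show hull ω x (u (i - k)) + (l:ℝ) = _
    rw [← hull_shift ω x hB hrot hmax, hushift]
    congr 1
    ring
  refine ⟨Y, ?_, ?_, ?_⟩
  · -- Birkhoff
    intro k l k' l'
    rcases le_total (-(ρ * (k:ℝ)) + (l:ℝ)) (-(ρ * (k':ℝ)) + (l':ℝ)) with hc | hc
    · left; intro i; rw [htau_form, htau_form]; exact hull_mono ω x hB hrot hmax (by linarith)
    · right; intro i; rw [htau_form, htau_form]; exact hull_mono ω x hB hrot hmax (by linarith)
  · -- periodicity
    funext i
    rw [htau_form]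
    show _ = hull ω x (u i)
    congr 1
    push_cast
    rw [hρp]
    ring
  · -- squeeze
    intro j hj1 hj2
    have hxj : hull ω x ((j:ℝ) * ω) = x j := hull_val ω x hB hrot hmax j
    have hkey : u j - (j:ℝ)*ω = (ρ - ω) * ((j:ℝ) - (i0:ℝ)) := by simp only [hu]; ring
    have hj1' : (i1:ℝ) ≤ (j:ℝ) := by exact_mod_cast hj1
    have hj2' : (j:ℝ) ≤ (i2:ℝ) := by exact_mod_cast hj2
    have habs : |(q:ℝ) - ω * (p:ℝ)| = |ω - ρ| * (p:ℝ) := by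
      have h1 : (q:ℝ) - ω * (p:ℝ) = (ρ - ω) * (p:ℝ) := by rw [← hρp]; ring
      rw [h1, abs_mul, abs_of_pos hp0, abs_sub_comm]
    have hbounds : u j ≤ (j:ℝ)*ω ∧ (j:ℝ)*ω - u j ≤ |ω - ρ| * ((i2:ℝ) - (i1:ℝ)) := by
      by_cases hc : ρ ≤ ω
      · have hi : (i0:ℝ) = (i1:ℝ) := by rw [hi0, if_pos hc]
        rw [hi] at hkey
        have h1 : ω - ρ ≤ |ω - ρ| := le_abs_self _
        have h2 : 0 ≤ ω - ρ := by linarith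
        constructor
        · nlinarith
        · nlinarith
      · push_neg at hc
        have hi : (i0:ℝ) = (i2:ℝ) := by rw [hi0, if_neg (not_le.mpr hc)]
        rw [hi] at hkey
        have h1 : ρ - ω ≤ |ω - ρ| := by rw [abs_sub_comm]; exact le_abs_self _
        have h2 : 0 ≤ ρ - ω := by linarith
        constructor
        · nlinarith
        · nlinarith
    constructor
    · -- lower bound
      rw [← hxj]
      exact hull_mono ω x hB hrot hmax hbounds.1
    · -- upper bound
      have hts : (t:ℝ) - ρ * (s:ℝ) = 1 / (p:ℝ) := by
        rw [hρdef]
        have hst' : (p:ℝ)*(t:ℝ) - (q:ℝ)*(s:ℝ) = 1 := by exact_mod_cast hst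
        field_simp
        linarith
      have hiter : ∀ n : ℕ, ∀ i : ℤ, (tau s t)^[n] Y i = hull ω x (u i + (n:ℝ)/(p:ℝ)) := by
        intro n
        induction n with
        | zero => intro i; simp [hY]
        | succ n ih =>
          intro i
          rw [Function.iterate_succ_apply']
          show ((tau s t)^[n] Y) (i - s) + (t:ℝ) = _
          rw [ih (i - s), ← hull_shift ω x hB hrot hmax, hushift]
          congr 1
          push_cast
          have hppos : (p:ℝ) ≠ 0 := ne_of_gt hp0
          have hts' : (t:ℝ)*(p:ℝ) - ρ*(s:ℝ)*(p:ℝ) = 1 := by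
            have h := congrArg (fun z : ℝ => z * (p:ℝ)) hts
            rw [sub_mul, one_div, inv_mul_cancel₀ hppos] at h
            linarith
          field_simp
          linarith [hts']
      rw [hiter]
      set c : ℝ := ((i2:ℝ) - (i1:ℝ)) * |(q:ℝ) - ω * (p:ℝ)| with hc
      have hc0 : 0 ≤ c := mul_nonneg (by linarith) (abs_nonneg _)
      have hac : c ≤ ((⌈c⌉.toNat : ℕ) : ℝ) := by
        have h1 : c ≤ (⌈c⌉ : ℝ) := Int.le_ceil c
        have h2 : (⌈c⌉ : ℤ) ≤ (⌈c⌉.toNat : ℤ) := Int.self_le_toNat _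
        have h3 : ((⌈c⌉ : ℤ) : ℝ) ≤ ((⌈c⌉.toNat : ℤ) : ℝ) := by exact_mod_cast h2
        push_cast at h3 ⊢
        linarith
      rw [← hxj]
      apply hull_mono ω x hB hrot hmax
      have hac2 : ((i2:ℝ) - (i1:ℝ)) * (|ω - ρ| * (p:ℝ)) ≤ ((⌈c⌉.toNat : ℕ) : ℝ) := by
        rw [← habs, ← hc]
        exact hac
      have hfin : (j:ℝ)*ω - u j ≤ ((⌈c⌉.toNat : ℕ) : ℝ) / (p:ℝ) := by
        rw [le_div_iff₀ hp0]
        nlinarith [mul_le_mul_of_nonneg_right hbounds.2 hp0.le]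
      linarith
end

section
/- (Near-periodicity theorem.) Let p ∈ ℕ with p ≥ 1 and q ∈ ℤ be relatively prime, let ω ∈ ℝ, let r ≥ 1 be an integer, let i_1 ≤ i_2 be integers, and set a := ⌈(i_2 − i_1)·|q − ω·p|⌉. If x is a maximally periodic Birkhoff sequence of rotation number ω, then there exists i_0 ∈ ℤ such that for all integers m, n with i_1 + r ≤ i_0 + m·p ≤ i_2 − r + 1 and i_1 + r ≤ i_0 + n·p ≤ i_2 − r + 1, one has Σ_{j=i_0−r}^{i_0+r−1} |x_{mp+j} − x_{np+j} − (m−n)q| ≤ 2r·a/p. -/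
open Filter Topology

namespace NearPeriod

lemma sum_Ico_add' (f : ℤ → ℝ) (a b t : ℤ) :
    (∑ i ∈ Finset.Ico a b, f (i + t)) = ∑ i ∈ Finset.Ico (a + t) (b + t), f i := by
  rw [← Finset.map_add_right_Ico, Finset.sum_map]
  rfl

lemma sum_Ico_consec (f : ℤ → ℝ) {a b c : ℤ} (hab : a ≤ b) (hbc : b ≤ c) :
    (∑ i ∈ Finset.Ico a b, f i) + (∑ i ∈ Finset.Ico b c, f i) = ∑ i ∈ Finset.Ico a c, f i := by
  rw [← Finset.sum_union (Finset.Ico_disjoint_Ico_consecutive a b c),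
    Finset.Ico_union_Ico_eq_Ico hab hbc]

lemma sum_tel (g : ℤ → ℝ) (n : ℤ) : ∀ K : ℕ,
    (∑ s ∈ Finset.Ico n (n + (K : ℤ)), (g (s + 1) - g s)) = g (n + K) - g n := by
  intro K
  induction K with
  | zero => simp
  | succ K ih =>
    have h1 : Finset.Ico n (n + (K : ℤ) + 1) = insert (n + (K : ℤ)) (Finset.Ico n (n + K)) := by
      ext i
      simp only [Finset.mem_Ico, Finset.mem_insert]
      omega
    push_cast
    rw [show n + ((K : ℤ) + 1) = n + (K : ℤ) + 1 by ring, h1, Finset.sum_insert (by simp), ih]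
    ring

lemma rot_le (x : ℤ → ℝ) (ω : ℝ) (hrot : HasRotNum x ω) (k l : ℤ)
    (h : ∀ i, x i ≤ x (i - k) + l) : ω * k ≤ l := by
  have hiter : ∀ n : ℕ, ∀ i : ℤ, x i ≤ x (i - n * k) + (n : ℝ) * l := by
    intro n
    induction n with
    | zero => intro i; simp
    | succ n ih =>
      intro i
      have h1 := h i
      have h2 := ih (i - k)
      have e1 : (i - k - (n : ℤ) * k) = i - ((n : ℤ) + 1) * k := by ring
      rw [e1] at h2
      push_cast
      push_cast at h2
      linarith
  rcases lt_trichotomy k 0 with hk | hk | hk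
  · -- k < 0 : i - n*k → +∞
    have hkR : (k : ℝ) < 0 := by exact_mod_cast hk
    have hkne : (k : ℝ) ≠ 0 := ne_of_lt hkR
    have hφ : Tendsto (fun n : ℕ => ((0 : ℤ) - (n : ℤ) * k)) atTop atTop := by
      apply tendsto_atTop_mono (f := fun n : ℕ => (n : ℤ))
      · intro n
        have h0 : (0 : ℤ) ≤ (n : ℤ) := Int.natCast_nonneg n
        nlinarith
      · exact tendsto_natCast_atTop_atTop
    have h2 : Tendsto (fun n : ℕ => x ((0 : ℤ) - (n : ℤ) * k) / (((0 : ℤ) - (n : ℤ) * k : ℤ) : ℝ))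
        atTop (𝓝 ω) := hrot.1.comp hφ
    have h3 : Tendsto (fun n : ℕ => (x 0 - (n : ℝ) * l) / ((0 : ℝ) - (n : ℝ) * k))
        atTop (𝓝 ((l : ℝ) / k)) := by
      have base : Tendsto (fun n : ℕ => (x 0 / (n : ℝ) - l) / (-(k : ℝ)))
          atTop (𝓝 ((0 - (l : ℝ)) / (-(k : ℝ)))) :=
        ((tendsto_const_div_atTop_nhds_zero_nat (x 0)).sub tendsto_const_nhds).div_const _
      have heq : ((0 : ℝ) - (l : ℝ)) / (-(k : ℝ)) = (l : ℝ) / k := by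
        field_simp
        ring
      rw [heq] at base
      refine Filter.Tendsto.congr' ?_ base
      filter_upwards [eventually_ge_atTop 1] with n hn
      have hn0 : (n : ℝ) ≠ 0 := by positivity
      field_simp
      try ring
    have hle : ∀ᶠ n : ℕ in atTop,
        (x 0 - (n : ℝ) * l) / ((0 : ℝ) - (n : ℝ) * k)
          ≤ x ((0 : ℤ) - (n : ℤ) * k) / (((0 : ℤ) - (n : ℤ) * k : ℤ) : ℝ) := by
      filter_upwards [eventually_ge_atTop 1] with n hn
      have hn1 : (1 : ℝ) ≤ (n : ℝ) := by exact_mod_cast hn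
      have hcR : (0 : ℝ) < (0 : ℝ) - (n : ℝ) * k := by nlinarith
      have hcast : (((0 : ℤ) - (n : ℤ) * k : ℤ) : ℝ) = (0 : ℝ) - (n : ℝ) * k := by
        push_cast; ring
      have hord : x 0 - (n : ℝ) * l ≤ x ((0 : ℤ) - (n : ℤ) * k) := by
        have := hiter n 0
        linarith
      rw [hcast]
      exact (div_le_div_iff_of_pos_right hcR).mpr hord
    have hfin : (l : ℝ) / k ≤ ω := le_of_tendsto_of_tendsto h3 h2 hle
    exact (div_le_iff_of_neg hkR).mp hfin
  · subst hk
    have h0 := hiter 1 0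
    simp at h0
    push_cast
    simp
    linarith
  · -- k > 0 : i - n*k → -∞
    have hkR : (0 : ℝ) < (k : ℝ) := by exact_mod_cast hk
    have hkne : (k : ℝ) ≠ 0 := ne_of_gt hkR
    have hφ : Tendsto (fun n : ℕ => ((0 : ℤ) - (n : ℤ) * k)) atTop atBot := by
      apply tendsto_atBot_mono (f := fun n : ℕ => -(n : ℤ))
      · intro n
        have h0 : (0 : ℤ) ≤ (n : ℤ) := Int.natCast_nonneg n
        nlinarith
      · exact tendsto_neg_atTop_atBot.comp tendsto_natCast_atTop_atTop
    have h2 : Tendsto (fun n : ℕ => x ((0 : ℤ) - (n : ℤ) * k) / (((0 : ℤ) - (n : ℤ) * k : ℤ) : ℝ))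
        atTop (𝓝 ω) := hrot.2.comp hφ
    have h3 : Tendsto (fun n : ℕ => (x 0 - (n : ℝ) * l) / ((0 : ℝ) - (n : ℝ) * k))
        atTop (𝓝 ((l : ℝ) / k)) := by
      have base : Tendsto (fun n : ℕ => (x 0 / (n : ℝ) - l) / (-(k : ℝ)))
          atTop (𝓝 ((0 - (l : ℝ)) / (-(k : ℝ)))) :=
        ((tendsto_const_div_atTop_nhds_zero_nat (x 0)).sub tendsto_const_nhds).div_const _
      have heq : ((0 : ℝ) - (l : ℝ)) / (-(k : ℝ)) = (l : ℝ) / k := by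
        field_simp
        ring
      rw [heq] at base
      refine Filter.Tendsto.congr' ?_ base
      filter_upwards [eventually_ge_atTop 1] with n hn
      have hn0 : (n : ℝ) ≠ 0 := by positivity
      field_simp
      try ring
    have hle : ∀ᶠ n : ℕ in atTop,
        x ((0 : ℤ) - (n : ℤ) * k) / (((0 : ℤ) - (n : ℤ) * k : ℤ) : ℝ)
          ≤ (x 0 - (n : ℝ) * l) / ((0 : ℝ) - (n : ℝ) * k) := by
      filter_upwards [eventually_ge_atTop 1] with n hn
      have hn1 : (1 : ℝ) ≤ (n : ℝ) := by exact_mod_cast hn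
      have hcR : ((0 : ℝ) - (n : ℝ) * k) < 0 := by nlinarith
      have hcast : (((0 : ℤ) - (n : ℤ) * k : ℤ) : ℝ) = (0 : ℝ) - (n : ℝ) * k := by
        push_cast; ring
      have hord : x 0 - (n : ℝ) * l ≤ x ((0 : ℤ) - (n : ℤ) * k) := by
        have := hiter n 0
        linarith
      rw [hcast]
      exact (div_le_div_right_of_neg hcR).mpr hord
    have hfin : ω ≤ (l : ℝ) / k := le_of_tendsto_of_tendsto h2 h3 hle
    exact (le_div_iff₀ hkR).mp hfin

lemma step_lo (x : ℤ → ℝ) (ω : ℝ) (hB : Birkhoff x) (hrot : HasRotNum x ω)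
    (hmax : MaxPeriodic ω x) (K L : ℤ) (hL : (L : ℝ) ≤ ω * K) :
    ∀ i, x i + (L : ℝ) ≤ x (i + K) := by
  rcases hB (-K) (-L) 0 0 with h | h
  · -- x (i + K) - L ≤ x i for all i
    have h' : ∀ i, x (i + K) ≤ x i + L := by
      intro i
      have := h i
      simp only [tau, sub_neg_eq_add, Int.cast_neg, sub_zero, Int.cast_zero, add_zero] at this
      linarith
    have hKL : ω * K ≤ L := by
      have := rot_le x ω hrot K L (fun i => by have := h' (i - K); simp at this; linarith)
      exact this
    have hEq : (L : ℝ) = ω * K := le_antisymm hL hKL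
    have hτ := hmax (-K) (-L) (by push_cast; linarith)
    intro i
    have := congrFun hτ i
    simp only [tau, sub_neg_eq_add, Int.cast_neg] at this
    linarith
  · intro i
    have := h i
    simp only [tau, sub_neg_eq_add, Int.cast_neg, sub_zero, Int.cast_zero, add_zero] at this
    linarith

lemma step_hi (x : ℤ → ℝ) (ω : ℝ) (hB : Birkhoff x) (hrot : HasRotNum x ω)
    (hmax : MaxPeriodic ω x) (K L : ℤ) (hL : ω * K ≤ (L : ℝ)) :
    ∀ i, x (i + K) ≤ x i + (L : ℝ) := by
  rcases hB (-K) (-L) 0 0 with h | h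
  · intro i
    have := h i
    simp only [tau, sub_neg_eq_add, Int.cast_neg, sub_zero, Int.cast_zero, add_zero] at this
    linarith
  · -- x i ≤ x (i+K) - L for all i
    have h' : ∀ i, x i ≤ x (i - (-K)) + ((-L : ℤ) : ℝ) := by
      intro i
      have := h i
      simp only [tau, sub_neg_eq_add, Int.cast_neg, sub_zero, Int.cast_zero, add_zero] at this
      simp only [sub_neg_eq_add, Int.cast_neg]
      linarith
    have hKL : ω * (-K : ℤ) ≤ ((-L : ℤ) : ℝ) := rot_le x ω hrot (-K) (-L) h'
    have hEq : (L : ℝ) = ω * K := by push_cast at hKL; linarith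
    have hτ := hmax (-K) (-L) (by push_cast; linarith)
    intro i
    have := congrFun hτ i
    simp only [tau, sub_neg_eq_add, Int.cast_neg] at this
    linarith



theorem main_nonneg (p : ℕ) (hp : 1 ≤ p) (q : ℤ) (hpq : IsCoprime (p : ℤ) q) (ω : ℝ)
    (r : ℕ) (hr : 1 ≤ r) (i1 i2 : ℤ) (h12 : i1 ≤ i2)
    (x : ℤ → ℝ) (hB : Birkhoff x) (hrot : HasRotNum x ω) (hmax : MaxPeriodic ω x)
    (hω : ω * (p : ℝ) ≤ (q : ℝ)) :
    ∃ i0 : ℤ, ∀ m n : ℤ,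
      i1 + (r : ℤ) ≤ i0 + m * (p : ℤ) → i0 + m * (p : ℤ) ≤ i2 - (r : ℤ) + 1 →
      i1 + (r : ℤ) ≤ i0 + n * (p : ℤ) → i0 + n * (p : ℤ) ≤ i2 - (r : ℤ) + 1 →
      ∑ j ∈ Finset.Icc (i0 - (r : ℤ)) (i0 + (r : ℤ) - 1),
          |x (m * (p : ℤ) + j) - x (n * (p : ℤ) + j) - ((m : ℝ) - (n : ℝ)) * (q : ℝ)| ≤
        2 * (r : ℝ) * ((⌈((i2 : ℝ) - (i1 : ℝ)) * |(q : ℝ) - ω * (p : ℝ)|⌉ : ℤ) : ℝ) / (p : ℝ) := by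
  have hp0 : (0 : ℤ) < (p : ℤ) := by exact_mod_cast hp
  have hpR : (0 : ℝ) < (p : ℝ) := by exact_mod_cast hp
  have hr0 : (0 : ℤ) < (r : ℤ) := by exact_mod_cast hr
  have hδ0 : (0 : ℝ) ≤ (q : ℝ) - ω * p := by linarith
  have habs : |(q : ℝ) - ω * (p : ℝ)| = (q : ℝ) - ω * p := abs_of_nonneg hδ0
  set a : ℤ := ⌈((i2 : ℝ) - (i1 : ℝ)) * |(q : ℝ) - ω * (p : ℝ)|⌉ with hadef
  have haN : ((i2 : ℝ) - i1) * ((q : ℝ) - ω * p) ≤ (a : ℝ) := by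
    rw [← habs]
    exact hadef ▸ Int.le_ceil _
  have ha0 : (0 : ℤ) ≤ a := by
    rw [hadef]
    apply Int.ceil_nonneg
    have : (0 : ℝ) ≤ (i2 : ℝ) - i1 := by
      have : (i1 : ℝ) ≤ i2 := by exact_mod_cast h12
      linarith
    exact mul_nonneg this (abs_nonneg _)
  set u : ℤ → ℝ := fun i => (q : ℝ) - x (i + p) + x i with hudef
  have hu0 : ∀ i, 0 ≤ u i := by
    intro i
    have := step_hi x ω hB hrot hmax (p : ℤ) q (by push_cast; exact hω) i
    simp only [hudef]
    linarith
  -- ===== block bound =====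
  have blk : ∀ d K : ℤ, K - d + p - 1 ≤ i2 - i1 →
      (∑ i ∈ Finset.Ico d K, u i) ≤ (a : ℝ) := by
    intro d K hK
    rcases le_or_gt K d with hKd | hKd
    · rw [Finset.Ico_eq_empty (by omega)]
      simpa using (by exact_mod_cast ha0 : (0 : ℝ) ≤ (a : ℝ))
    obtain ⟨Mn, hMn⟩ : ∃ Mn : ℕ, K = d + (Mn : ℤ) := ⟨(K - d).toNat, by omega⟩
    subst hMn
    set M : ℤ := (Mn : ℤ) with hMdef
    have hM0 : 0 ≤ M := Int.natCast_nonneg Mn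
    obtain ⟨c0, d0, hcd⟩ := hpq
    have ht0 : 0 ≤ (d0 * a - M) % p := Int.emod_nonneg _ (by omega)
    have htp : (d0 * a - M) % p < p := Int.emod_lt_of_pos _ hp0
    set t : ℤ := (d0 * a - M) % p with htdef
    set V : ℤ := M + t with hVdef
    have hVN : V ≤ i2 - i1 := by omega
    -- telescoping identity
    have expand : (∑ i ∈ Finset.Ico d (d + M), u i)
        = (Mn : ℝ) * q - ((∑ j ∈ Finset.Ico (0 : ℤ) p, x (d + M + j))
            - (∑ j ∈ Finset.Ico (0 : ℤ) p, x (d + j))) := by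
      have e1 : (∑ i ∈ Finset.Ico d (d + M), u i)
          = (Mn : ℝ) * q - (∑ i ∈ Finset.Ico (d + p) (d + M + p), x i)
            + ∑ i ∈ Finset.Ico d (d + M), x i := by
        simp only [hudef]
        rw [Finset.sum_add_distrib, Finset.sum_sub_distrib, Finset.sum_const, Int.card_Ico]
        have hxp : (∑ i ∈ Finset.Ico d (d + M), x (i + p))
            = ∑ i ∈ Finset.Ico (d + p) (d + M + p), x i := sum_Ico_add' x d (d + M) (p : ℤ)
        rw [hxp]
        have hcard : (d + M - d).toNat = Mn := by simp [hMdef]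
        rw [hcard]
        push_cast
        ring
      have b1 : (∑ j ∈ Finset.Ico (0 : ℤ) p, x (d + M + j))
          = ∑ i ∈ Finset.Ico (d + M) (d + M + p), x i := by
        have := sum_Ico_add' x 0 (p : ℤ) (d + M)
        rw [show (0 : ℤ) + (d + M) = d + M by ring, show (p : ℤ) + (d + M) = d + M + p by ring] at this
        rw [← this]
        exact Finset.sum_congr rfl fun j _ => by rw [add_comm j (d + M)]
      have b2 : (∑ j ∈ Finset.Ico (0 : ℤ) p, x (d + j))
          = ∑ i ∈ Finset.Ico d (d + p), x i := by
        have := sum_Ico_add' x 0 (p : ℤ) d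
        rw [show (0 : ℤ) + d = d by ring, show (p : ℤ) + d = d + p by ring] at this
        rw [← this]
        exact Finset.sum_congr rfl fun j _ => by rw [add_comm j d]
      have s1 := sum_Ico_consec x (show d ≤ d + M by omega) (show d + M ≤ d + M + p by omega)
      have s2 := sum_Ico_consec x (show d ≤ d + p by omega) (show d + p ≤ d + M + p by omega)
      rw [e1, b1, b2]
      linarith
    -- pairing bound
    have pair : (∑ j ∈ Finset.Ico (0 : ℤ) p, x (d + M + (j + t) % p))
        = ∑ j ∈ Finset.Ico (0 : ℤ) p, x (d + M + j) := by
      apply Finset.sum_nbij' (fun j => (j + t) % p) (fun j => (j - t) % p)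
      · intro j hj
        simp only [Finset.mem_Ico] at hj ⊢
        exact ⟨Int.emod_nonneg _ (by omega), Int.emod_lt_of_pos _ hp0⟩
      · intro j hj
        simp only [Finset.mem_Ico] at hj ⊢
        exact ⟨Int.emod_nonneg _ (by omega), Int.emod_lt_of_pos _ hp0⟩
      · intro j hj
        simp only [Finset.mem_Ico] at hj
        have h1 : ((j + t) % p - t) % p = (j + t - t) % p := by
          rw [Int.sub_emod, Int.emod_emod_of_dvd _ dvd_rfl, ← Int.sub_emod]
        rw [h1, show j + t - t = j by ring, Int.emod_eq_of_lt hj.1 hj.2]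
      · intro j hj
        simp only [Finset.mem_Ico] at hj
        have h1 : ((j - t) % p + t) % p = (j - t + t) % p := by
          rw [Int.add_emod, Int.emod_emod_of_dvd _ dvd_rfl, ← Int.add_emod]
        rw [h1, show j - t + t = j by ring, Int.emod_eq_of_lt hj.1 hj.2]
      · intro j hj
        rfl
    have perterm : ∀ j ∈ Finset.Ico (0 : ℤ) p,
        x (d + j) + (((⌊(V : ℝ) * ω⌋ : ℤ) : ℝ) - (if (p : ℤ) ≤ j + t then (q : ℝ) else 0))
          ≤ x (d + M + (j + t) % p) := by
      intro j hj
      simp only [Finset.mem_Ico] at hj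
      by_cases hc : (p : ℤ) ≤ j + t
      · have hmod : (j + t) % p = j + t - p := by
          conv_lhs => rw [show j + t = (j + t - (p : ℤ)) + (p : ℤ) * 1 by ring]
          rw [Int.add_mul_emod_self_left, Int.emod_eq_of_lt (by omega) (by omega)]
        rw [hmod, if_pos hc]
        have hstep := step_lo x ω hB hrot hmax (V - p) (⌊(V : ℝ) * ω⌋ - q) ?_ (d + j)
        · have harg : d + j + (V - p) = d + M + (j + t - p) := by
            rw [hVdef]; ring
          rw [harg] at hstep
          push_cast at hstep ⊢
          linarith
        · push_cast
          have h1 : ((⌊(V : ℝ) * ω⌋ : ℤ) : ℝ) ≤ (V : ℝ) * ω := Int.floor_le _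
          have h2 : ω * ((V : ℝ) - p) = (V : ℝ) * ω - ω * p := by ring
          rw [h2]
          linarith
      · have hmod : (j + t) % p = j + t := Int.emod_eq_of_lt (by omega) (by omega)
        rw [hmod, if_neg hc]
        have hstep := step_lo x ω hB hrot hmax V ⌊(V : ℝ) * ω⌋ ?_ (d + j)
        · have harg : d + j + V = d + M + (j + t) := by rw [hVdef]; ring
          rw [harg] at hstep
          linarith
        · rw [mul_comm]
          exact Int.floor_le _
    have hsum_ite : (∑ j ∈ Finset.Ico (0 : ℤ) p, (if (p : ℤ) ≤ j + t then (q : ℝ) else 0))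
        = (t : ℝ) * q := by
      have hfil : (Finset.Ico (0 : ℤ) p).filter (fun j => (p : ℤ) ≤ j + t) = Finset.Ico (p - t) p := by
        ext j
        simp only [Finset.mem_filter, Finset.mem_Ico]
        omega
      rw [Finset.sum_ite, Finset.sum_const, Finset.sum_const, hfil, Int.card_Ico]
      have h1 : ((p : ℤ) - (p - t)).toNat = t.toNat := by omega
      rw [h1, nsmul_eq_mul, smul_zero, add_zero]
      have h2 : ((t.toNat : ℕ) : ℝ) = (t : ℝ) := by
        exact_mod_cast congrArg (fun z : ℤ => (z : ℝ)) (Int.toNat_of_nonneg ht0)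
      rw [h2]
    have hconst : (∑ _j ∈ Finset.Ico (0 : ℤ) p, ((⌊(V : ℝ) * ω⌋ : ℤ) : ℝ))
        = (p : ℝ) * ((⌊(V : ℝ) * ω⌋ : ℤ) : ℝ) := by
      rw [Finset.sum_const, Int.card_Ico]
      simp
    -- C1 : block sum ≤ V q - p ⌊V ω⌋
    have hC1 : (∑ i ∈ Finset.Ico d (d + M), u i)
        ≤ (V : ℝ) * q - (p : ℝ) * ((⌊(V : ℝ) * ω⌋ : ℤ) : ℝ) := by
      have hsumle : (∑ j ∈ Finset.Ico (0 : ℤ) p,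
          (x (d + j) + (((⌊(V : ℝ) * ω⌋ : ℤ) : ℝ) - (if (p : ℤ) ≤ j + t then (q : ℝ) else 0))))
            ≤ ∑ j ∈ Finset.Ico (0 : ℤ) p, x (d + M + (j + t) % p) :=
        Finset.sum_le_sum perterm
      rw [pair] at hsumle
      rw [Finset.sum_add_distrib, Finset.sum_sub_distrib, hsum_ite, hconst] at hsumle
      rw [expand]
      have hMV : (Mn : ℝ) * q = (V : ℝ) * q - (t : ℝ) * q := by
        rw [hVdef, hMdef]; push_cast; ring
      rw [hMV]
      linarith
    -- arithmetic: F ≤ a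
    have hdvd : (p : ℤ) ∣ V * q - a := by
      have hE : t = d0 * a - M - (p : ℤ) * ((d0 * a - M) / p) := by
        rw [htdef, Int.emod_def]
      refine ⟨-(a * c0) - ((d0 * a - M) / p) * q, ?_⟩
      have hV : V = M + t := hVdef
      rw [hV, hE]
      linear_combination (a : ℤ) * hcd
    have hFlt : ((V * q - (p : ℤ) * ⌊(V : ℝ) * ω⌋ : ℤ) : ℝ) < (a : ℝ) + p := by
      push_cast
      have h1 : (V : ℝ) * ω < ((⌊(V : ℝ) * ω⌋ : ℤ) : ℝ) + 1 := Int.lt_floor_add_one _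
      have h2 : (V : ℝ) * q - (p : ℝ) * ((V : ℝ) * ω) = (V : ℝ) * ((q : ℝ) - ω * p) := by ring
      have h3 : (V : ℝ) * ((q : ℝ) - ω * p) ≤ ((i2 : ℝ) - i1) * ((q : ℝ) - ω * p) := by
        apply mul_le_mul_of_nonneg_right _ hδ0
        have : (V : ℝ) ≤ ((i2 - i1 : ℤ) : ℝ) := by exact_mod_cast hVN
        push_cast at this
        linarith
      nlinarith
    have hFa : V * q - (p : ℤ) * ⌊(V : ℝ) * ω⌋ ≤ a := by
      set F : ℤ := V * q - (p : ℤ) * ⌊(V : ℝ) * ω⌋ with hFdef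
      have hdvd2 : (p : ℤ) ∣ F - a := by
        have : F - a = (V * q - a) - (p : ℤ) * ⌊(V : ℝ) * ω⌋ := by rw [hFdef]; ring
        rw [this]
        exact dvd_sub hdvd ⟨⌊(V : ℝ) * ω⌋, rfl⟩
      have hFlt' : F < a + p := by exact_mod_cast hFlt
      by_contra hcon
      push_neg at hcon
      have h1 : 0 < F - a := by omega
      have h2 : (p : ℤ) ≤ F - a := Int.le_of_dvd h1 hdvd2
      omega
    calc (∑ i ∈ Finset.Ico d (d + M), u i)
        ≤ (V : ℝ) * q - (p : ℝ) * ((⌊(V : ℝ) * ω⌋ : ℤ) : ℝ) := hC1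
      _ = ((V * q - (p : ℤ) * ⌊(V : ℝ) * ω⌋ : ℤ) : ℝ) := by push_cast; ring
      _ ≤ (a : ℝ) := by exact_mod_cast hFa
  -- ===== window sums and pigeonhole =====
  set UB : ℤ := i2 - p + 2 - 2 * r with hUBdef
  set S2 : ℤ → ℝ := fun w => ∑ j ∈ Finset.Ico (0 : ℤ) (2 * r), u (w + j) with hS2def
  have hS2nonneg : ∀ w, 0 ≤ S2 w := fun w => Finset.sum_nonneg fun j _ => hu0 _
  set E : ℤ → ℝ := fun c => ∑ w ∈ (Finset.Ico i1 UB).filter (fun w => w % p = c), S2 w with hEdef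
  have key1 : (∑ c ∈ Finset.Ico (0 : ℤ) p, E c) = ∑ w ∈ Finset.Ico i1 UB, S2 w := by
    simp only [hEdef]
    apply Finset.sum_fiberwise_of_maps_to
    intro w _
    simp only [Finset.mem_Ico]
    exact ⟨Int.emod_nonneg _ (by omega), Int.emod_lt_of_pos _ hp0⟩
  have key2 : (∑ w ∈ Finset.Ico i1 UB, S2 w) ≤ 2 * (r : ℝ) * a := by
    simp only [hS2def]
    rw [Finset.sum_comm]
    have hinner : ∀ j ∈ Finset.Ico (0 : ℤ) (2 * r),
        (∑ w ∈ Finset.Ico i1 UB, u (w + j)) ≤ (a : ℝ) := by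
      intro j _
      rw [sum_Ico_add' u i1 UB j]
      apply blk
      omega
    calc (∑ j ∈ Finset.Ico (0 : ℤ) (2 * r), ∑ w ∈ Finset.Ico i1 UB, u (w + j))
        ≤ ∑ _j ∈ Finset.Ico (0 : ℤ) (2 * r), (a : ℝ) := Finset.sum_le_sum hinner
      _ = 2 * (r : ℝ) * a := by
          rw [Finset.sum_const, Int.card_Ico]
          have : ((2 * (r : ℤ) - 0).toNat : ℝ) = 2 * (r : ℝ) := by
            have h1 : ((2 * (r : ℤ) - 0).toNat : ℤ) = 2 * r := by omega
            exact_mod_cast congrArg (fun z : ℤ => (z : ℝ)) h1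
          rw [nsmul_eq_mul, this]
  have key3 : ∃ c ∈ Finset.Ico (0 : ℤ) p, E c ≤ 2 * (r : ℝ) * a / p := by
    by_contra hcon
    push_neg at hcon
    have hlt : (∑ _c ∈ Finset.Ico (0 : ℤ) p, (2 * (r : ℝ) * a / p)) <
        ∑ c ∈ Finset.Ico (0 : ℤ) p, E c :=
      Finset.sum_lt_sum_of_nonempty ⟨0, by simp [Finset.mem_Ico]; omega⟩ hcon
    rw [Finset.sum_const, Int.card_Ico] at hlt
    have hcp : (((p : ℤ) - 0).toNat : ℝ) = (p : ℝ) := by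
      have h1 : (((p : ℤ) - 0).toNat : ℤ) = p := by omega
      exact_mod_cast congrArg (fun z : ℤ => (z : ℝ)) h1
    rw [nsmul_eq_mul, hcp] at hlt
    rw [key1] at hlt
    have : (p : ℝ) * (2 * (r : ℝ) * a / p) = 2 * (r : ℝ) * a := by field_simp
    rw [this] at hlt
    linarith
  obtain ⟨c, hcmem, hEc⟩ := key3
  have hc0 : 0 ≤ c ∧ c < p := by simpa [Finset.mem_Ico] using hcmem
  refine ⟨c + r, ?_⟩
  have KEY : ∀ m n : ℤ, n ≤ m →
      i1 + (r : ℤ) ≤ (c + r) + n * p → (c + r) + m * p ≤ i2 - (r : ℤ) + 1 →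
      (∑ j ∈ Finset.Icc (c + (r : ℤ) - r) (c + r + r - 1),
          |x (m * (p : ℤ) + j) - x (n * (p : ℤ) + j) - ((m : ℝ) - (n : ℝ)) * q|)
        ≤ 2 * (r : ℝ) * a / p := by
    intro m n hnm h1n h2m
    have hIcc : Finset.Icc (c + (r : ℤ) - r) (c + r + r - 1) = Finset.Ico c (c + 2 * r) := by
      ext i
      simp only [Finset.mem_Icc, Finset.mem_Ico]
      omega
    rw [hIcc]
    -- rewrite each term as a sum of u
    have hterm : ∀ j : ℤ, |x (m * (p : ℤ) + j) - x (n * (p : ℤ) + j) - ((m : ℝ) - (n : ℝ)) * q|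
        = ∑ s ∈ Finset.Ico n m, u (s * p + j) := by
      intro j
      have htel : (∑ s ∈ Finset.Ico n m, (x ((s + 1) * p + j) - x (s * p + j)))
          = x (m * p + j) - x (n * p + j) := by
        obtain ⟨k, hk⟩ : ∃ k : ℕ, m = n + (k : ℤ) := ⟨(m - n).toNat, by omega⟩
        subst hk
        exact sum_tel (fun s => x (s * p + j)) n k
      have hsum : (∑ s ∈ Finset.Ico n m, u (s * p + j))
          = ((m : ℝ) - n) * q - (x (m * p + j) - x (n * p + j)) := by
        have e1 : ∀ s : ℤ, u (s * p + j) = (q : ℝ) - (x ((s + 1) * p + j) - x (s * p + j)) := by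
          intro s
          simp only [hudef]
          rw [show s * p + j + p = (s + 1) * p + j by ring]
          ring
        rw [Finset.sum_congr rfl fun s _ => e1 s, Finset.sum_sub_distrib, htel,
          Finset.sum_const, Int.card_Ico]
        have : (((m - n).toNat : ℕ) : ℝ) = (m : ℝ) - n := by
          have h1 : (((m - n).toNat : ℕ) : ℤ) = m - n := Int.toNat_of_nonneg (by omega)
          exact_mod_cast congrArg (fun z : ℤ => (z : ℝ)) h1
        rw [nsmul_eq_mul, this]
      rw [show x (m * (p : ℤ) + j) - x (n * (p : ℤ) + j) - ((m : ℝ) - (n : ℝ)) * q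
          = -(∑ s ∈ Finset.Ico n m, u (s * p + j)) by rw [hsum]; ring, abs_neg,
        abs_of_nonneg (Finset.sum_nonneg fun s _ => hu0 _)]
    rw [Finset.sum_congr rfl fun j _ => hterm j]
    rw [Finset.sum_comm]
    have hinner : ∀ s : ℤ, (∑ j ∈ Finset.Ico c (c + 2 * r), u (s * p + j)) = S2 (s * p + c) := by
      intro s
      simp only [hS2def]
      have h1 : (∑ j ∈ Finset.Ico (0 : ℤ) (2 * r), u (s * p + c + j))
          = ∑ j ∈ Finset.Ico (0 : ℤ) (2 * r), (fun j' => u (s * p + j')) (j + c) := by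
        apply Finset.sum_congr rfl
        intro j _
        simp only
        rw [show s * p + c + j = s * p + (j + c) by ring]
      rw [h1, sum_Ico_add' (fun j' => u (s * p + j')) 0 (2 * r) c]
      rw [show (0 : ℤ) + c = c by ring, show 2 * (r : ℤ) + c = c + 2 * r by ring]
    rw [Finset.sum_congr rfl fun s _ => hinner s]
    -- compare with E c
    have hmap : ∀ s ∈ Finset.Ico n m,
        s * p + c ∈ (Finset.Ico i1 UB).filter (fun w => w % p = c) := by
      intro s hs
      simp only [Finset.mem_Ico] at hs
      simp only [Finset.mem_filter, Finset.mem_Ico]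
      have hnp : n * p ≤ s * p := mul_le_mul_of_nonneg_right hs.1 (le_of_lt hp0)
      have hmp : s * p ≤ (m - 1) * p := mul_le_mul_of_nonneg_right (by omega) (le_of_lt hp0)
      have hmp2 : (m - 1) * (p : ℤ) = m * p - p := by ring
      refine ⟨⟨by omega, by omega⟩, ?_⟩
      rw [show s * p + c = c + (p : ℤ) * s by ring, Int.add_mul_emod_self_left,
        Int.emod_eq_of_lt hc0.1 hc0.2]
    have himg : (∑ s ∈ Finset.Ico n m, S2 (s * p + c))
        = ∑ w ∈ (Finset.Ico n m).image (fun s => s * p + c), S2 w := by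
      rw [Finset.sum_image]
      intro s1 _ s2 _ heq
      have : s1 * p = s2 * p := by have h' : s1 * p + c = s2 * p + c := heq; omega
      exact mul_right_cancel₀ (by omega) this
    rw [himg]
    calc (∑ w ∈ (Finset.Ico n m).image (fun s => s * p + c), S2 w)
        ≤ ∑ w ∈ (Finset.Ico i1 UB).filter (fun w => w % p = c), S2 w := by
          apply Finset.sum_le_sum_of_subset_of_nonneg
          · intro w hw
            simp only [Finset.mem_image] at hw
            obtain ⟨s, hs, rfl⟩ := hw
            exact hmap s hs
          · intro w _ _
            exact hS2nonneg w
      _ = E c := by rw [hEdef]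
      _ ≤ 2 * (r : ℝ) * a / p := hEc
  intro m n h1m h2m h1n h2n
  rcases le_total n m with hnm | hnm
  · exact KEY m n hnm h1n h2m
  · have hres := KEY n m hnm h1m h2n
    refine le_trans (le_of_eq ?_) hres
    apply Finset.sum_congr rfl
    intro j _
    rw [show x (m * (p : ℤ) + j) - x (n * (p : ℤ) + j) - ((m : ℝ) - (n : ℝ)) * q
        = -(x (n * (p : ℤ) + j) - x (m * (p : ℤ) + j) - ((n : ℝ) - (m : ℝ)) * q) by ring, abs_neg]


end NearPeriod

/-- Near-periodicity theorem: for a maximally periodic Birkhoff sequence `x`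
of rotation number `ω` and relatively prime `(p,q)`, there is `i₀` such that for all `m, n`
with `i₁ + r ≤ i₀ + mp, i₀ + np ≤ i₂ - r + 1`,
`∑_{j=i₀-r}^{i₀+r-1} |x_{mp+j} - x_{np+j} - (m-n)q| ≤ 2ra/p` where
`a = ⌈(i₂-i₁)|q - ωp|⌉`. -/
theorem near_periodicity
    (p : ℕ) (hp : 1 ≤ p) (q : ℤ) (hpq : IsCoprime (p : ℤ) q) (ω : ℝ)
    (r : ℕ) (hr : 1 ≤ r) (i1 i2 : ℤ) (h12 : i1 ≤ i2)
    (x : ℤ → ℝ) (hB : Birkhoff x) (hrot : HasRotNum x ω) (hmax : MaxPeriodic ω x) :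
    ∃ i0 : ℤ, ∀ m n : ℤ,
      i1 + (r : ℤ) ≤ i0 + m * (p : ℤ) → i0 + m * (p : ℤ) ≤ i2 - (r : ℤ) + 1 →
      i1 + (r : ℤ) ≤ i0 + n * (p : ℤ) → i0 + n * (p : ℤ) ≤ i2 - (r : ℤ) + 1 →
      ∑ j ∈ Finset.Icc (i0 - (r : ℤ)) (i0 + (r : ℤ) - 1),
          |x (m * (p : ℤ) + j) - x (n * (p : ℤ) + j) - ((m : ℝ) - (n : ℝ)) * (q : ℝ)| ≤
        2 * (r : ℝ) * ((⌈((i2 : ℝ) - (i1 : ℝ)) * |(q : ℝ) - ω * (p : ℝ)|⌉ : ℤ) : ℝ) / (p : ℝ) := by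
  rcases le_total (ω * (p : ℝ)) (q : ℝ) with hω | hω
  · exact NearPeriod.main_nonneg p hp q hpq ω r hr i1 i2 h12 x hB hrot hmax hω
  · -- apply the nonnegative case to -x, -q, -ω
    have hB' : Birkhoff (fun i => -x i) := by
      intro k l k' l'
      rcases hB k' (-l') k (-l) with h | h
      · left
        intro i
        have := h i
        simp only [tau, Int.cast_neg] at this ⊢
        linarith
      · right
        intro i
        have := h i
        simp only [tau, Int.cast_neg] at this ⊢
        linarith
    have hrot' : HasRotNum (fun i => -x i) (-ω) := by
      constructor
      · refine hrot.1.neg.congr fun n => ?_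
        simp [neg_div]
      · refine hrot.2.neg.congr fun n => ?_
        simp [neg_div]
    have hmax' : MaxPeriodic (-ω) (fun i => -x i) := by
      intro k l hkl
      have h2 : -ω * (k : ℝ) + ((-l : ℤ) : ℝ) = 0 := by push_cast at hkl ⊢; linarith
      have h3 := hmax k (-l) h2
      funext i
      have := congrFun h3 i
      simp only [tau, Int.cast_neg] at this ⊢
      linarith
    have hω' : (-ω) * (p : ℝ) ≤ ((-q : ℤ) : ℝ) := by push_cast; linarith
    obtain ⟨i0, hi0⟩ := NearPeriod.main_nonneg p hp (-q) hpq.neg_right (-ω) r hr i1 i2 h12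
      (fun i => -x i) hB' hrot' hmax' hω'
    refine ⟨i0, fun m n h1 h2 h3 h4 => ?_⟩
    have hres := hi0 m n h1 h2 h3 h4
    have hceq : (⌈((i2 : ℝ) - (i1 : ℝ)) * |((-q : ℤ) : ℝ) - (-ω) * (p : ℝ)|⌉ : ℤ)
        = ⌈((i2 : ℝ) - (i1 : ℝ)) * |(q : ℝ) - ω * (p : ℝ)|⌉ := by
      congr 1
      rw [show ((-q : ℤ) : ℝ) - (-ω) * (p : ℝ) = -((q : ℝ) - ω * (p : ℝ)) by push_cast; ring,
        abs_neg]
    rw [hceq] at hres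
    refine le_trans (le_of_eq ?_) hres
    apply Finset.sum_congr rfl
    intro j _
    have e1 : (fun i => -x i) (m * (p : ℤ) + j) - (fun i => -x i) (n * (p : ℤ) + j)
        - ((m : ℝ) - (n : ℝ)) * ((-q : ℤ) : ℝ)
        = -(x (m * (p : ℤ) + j) - x (n * (p : ℤ) + j) - ((m : ℝ) - (n : ℝ)) * (q : ℝ)) := by
      simp only
      push_cast
      ring
    rw [e1, abs_neg]
end

section
/- Suppose p' ∈ ℕ, p ∈ ℕ, q ∈ ℤ with p,p' ≥ 1, and write p'·p = m·p̃ and p'·q + 1 = m·q̃ with p̃ ∈ ℕ, q̃ ∈ ℤ relatively prime and m ∈ ℕ, m ≥ 1. Then the least common multiple of p and p̃ equals p'·p. If moreover p' is characterized by 1/(p'·p) < ω − q/p < 1/((p'−1)·p) for some ω ∈ ℝ (with p' ≥ 2), then p' ≤ p̃ ≤ p'·p. -/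
open Filter Topology

/-- write `p'p = m p̃` and `p'q + 1 = m q̃` with `p̃, q̃` relatively prime.
Then `lcm(p, p̃) = p'p`; and if moreover `1/(p'p) < ω - q/p < 1/((p'-1)p)` with `p' ≥ 2`,
then `p' ≤ p̃ ≤ p'p`. -/
theorem lcm_and_bounds_for_ptilde
    (p' p : ℕ) (q : ℤ) (hp : 1 ≤ p) (hp' : 1 ≤ p')
    (m ptil : ℕ) (qtil : ℤ) (hm : 1 ≤ m) (hptil : 1 ≤ ptil)
    (hfac1 : p' * p = m * ptil) (hfac2 : (p' : ℤ) * q + 1 = (m : ℤ) * qtil)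
    (hcop : IsCoprime (ptil : ℤ) qtil) :
    Nat.lcm p ptil = p' * p ∧
    (∀ ω : ℝ, 2 ≤ p' →
      1 / ((p' : ℝ) * (p : ℝ)) < ω - (q : ℝ) / (p : ℝ) →
      ω - (q : ℝ) / (p : ℝ) < 1 / (((p' : ℝ) - 1) * (p : ℝ)) →
      p' ≤ ptil ∧ ptil ≤ p' * p) := by
  -- m is coprime to p'
  have hcop' : Nat.Coprime m p' := by
    have hd : (Nat.gcd m p' : ℤ) ∣ 1 := by
      have h1 : (Nat.gcd m p' : ℤ) ∣ (m : ℤ) * qtil :=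
        dvd_mul_of_dvd_left (Int.natCast_dvd_natCast.mpr (Nat.gcd_dvd_left m p')) _
      have h2 : (Nat.gcd m p' : ℤ) ∣ (p' : ℤ) * q :=
        dvd_mul_of_dvd_left (Int.natCast_dvd_natCast.mpr (Nat.gcd_dvd_right m p')) _
      have h3 := dvd_sub h1 h2
      rwa [← hfac2, add_sub_cancel_left] at h3
    exact Nat.dvd_one.mp (by exact_mod_cast hd)
  -- hence m divides p
  have hmp : m ∣ p := hcop'.dvd_of_dvd_mul_left ⟨ptil, hfac1⟩
  obtain ⟨s, hs⟩ := hmp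
  have hs1 : 1 ≤ s := by
    rcases Nat.eq_zero_or_pos s with h | h
    · subst h; rw [mul_zero] at hs; omega
    · exact h
  have hptil : ptil = p' * s := by
    have : m * (p' * s) = m * ptil := by rw [← hfac1, hs]; ring
    exact (Nat.eq_of_mul_eq_mul_left (by omega) this).symm
  constructor
  · rw [hs, hptil, mul_comm m s, mul_comm p' s, Nat.lcm_mul_left,
      Nat.Coprime.lcm_eq_mul hcop']
    ring
  · intro ω _ _ _
    constructor
    · rw [hptil]; exact Nat.le_mul_of_pos_right p' hs1
    · rw [hptil, hs]
      calc p' * s ≤ p' * (m * s) := Nat.mul_le_mul_left p' (Nat.le_mul_of_pos_left s hm)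
        _ = p' * (m * s) := rfl
end
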